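/- arXiv:2511.06484 — 2 statements merged into one kernel-verified Lean document; each statement's English description precedes it below -/
import Mathlib

section
/- Let n ≥ 4, let a ∈ ℂ, let L be a linear form in x_1,…,x_b, let q be an integer with 1 ≤ q ≤ b, and let F = (a/n!)·x_0^n + (1/(n-1)!)·x_0^{n-1}·L(x_1,…,x_b) + (1/(2(n-2)!))·x_0^{n-2}·(x_1^2+⋯+x_q^2) + G(x_1,…,x_b) ∈ ℂ[x_0,…,x_b], where G is a form of degree n not involving x_0. Then rk 𝓗_F(e_0) ≥ 2q, where e_0 = (1,0,…,0) ∈ ℂ^{b+1}. -/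
open MvPolynomial

/-- The tensor of `k`-th order partial derivatives of `F`, evaluated at `v`:
its `(i_1, …, i_k)` entry is `(∂^k F / ∂x_{i_1} ⋯ ∂x_{i_k})(v)`. -/
noncomputable def HF {σ : Type*} [DecidableEq σ] (k : ℕ) (F : MvPolynomial σ ℂ) (v : σ → ℂ) :
    (Fin k → σ) → ℂ := fun idx =>
  eval v ((List.ofFn idx).foldl (fun p i => pderiv i p) F)

/-- A tensor of type `m × ⋯ × m` (`k` factors) has rank one if it is nonzero and is an
outer product of `k` vectors. -/
def IsRankOne {k m : ℕ} (T : (Fin k → Fin m) → ℂ) : Prop :=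
  T ≠ 0 ∧ ∃ v : Fin k → Fin m → ℂ, ∀ j, T j = ∏ i, v i (j i)

/-- The rank of a tensor: the least `r` such that `T` is a sum of `r` rank-one tensors. -/
noncomputable def tensorRank {k m : ℕ} (T : (Fin k → Fin m) → ℂ) : ℕ :=
  sInf {r | ∃ f : Fin r → ((Fin k → Fin m) → ℂ), (∀ s, IsRankOne (f s)) ∧ T = ∑ s, f s}


section Tensor

open Finset

variable {K M : ℕ}

/-- outer product tensor -/
def Outer (v : Fin K → Fin M → ℂ) : (Fin K → Fin M) → ℂ := fun idx => ∏ i, v i (idx i)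

def RankSet {K M : ℕ} (T : (Fin K → Fin M) → ℂ) : Set ℕ :=
  {r | ∃ f : Fin r → ((Fin K → Fin M) → ℂ), (∀ s, IsRankOne (f s)) ∧ T = ∑ s, f s}

lemma tensorRank_eq_sInf (T : (Fin K → Fin M) → ℂ) : tensorRank T = sInf (RankSet T) := rfl

lemma exists_mem_rankSet_of_sum {ι : Type*} [DecidableEq ι] (S : Finset ι)
    (w : ι → Fin K → Fin M → ℂ) (T : (Fin K → Fin M) → ℂ)
    (hT : T = ∑ s ∈ S, Outer (w s)) : ∃ r ∈ RankSet T, r ≤ S.card := by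
  classical
  set S' : Finset ι := S.filter (fun s => Outer (w s) ≠ 0) with hS'
  have hT' : T = ∑ s ∈ S', Outer (w s) := by
    rw [hT]
    exact (Finset.sum_filter_of_ne (fun x _ h => h)).symm
  set e := S'.equivFin with he
  refine ⟨S'.card, ⟨fun t => Outer (w (e.symm t)), fun t => ?_, ?_⟩, ?_⟩
  · constructor
    · exact (Finset.mem_filter.mp (e.symm t).2).2
    · exact ⟨w (e.symm t), fun j => rfl⟩
  · rw [hT']
    rw [← Finset.sum_attach S' (fun s => Outer (w s))]
    exact (Equiv.sum_comp e.symm (fun s => Outer (w s))).symm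
  · exact Finset.card_filter_le _ _

lemma tensorRank_le_card {ι : Type*} [DecidableEq ι] (S : Finset ι)
    (w : ι → Fin K → Fin M → ℂ) (T : (Fin K → Fin M) → ℂ)
    (hT : T = ∑ s ∈ S, Outer (w s)) : tensorRank T ≤ S.card := by
  obtain ⟨r, hr, hle⟩ := exists_mem_rankSet_of_sum S w T hT
  exact le_trans (Nat.sInf_le hr) hle

lemma rankSet_nonempty (hK : K ≠ 0) (T : (Fin K → Fin M) → ℂ) : (RankSet T).Nonempty := by
  classical
  have hpos : 0 < K := Nat.pos_of_ne_zero hK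
  set i0 : Fin K := ⟨0, hpos⟩
  set v : (Fin K → Fin M) → Fin K → Fin M → ℂ := fun j i x =>
    if i = i0 then (if x = j i then T j else 0) else (if x = j i then 1 else 0) with hv
  have key : ∀ j idx, Outer (v j) idx = if idx = j then T j else 0 := by
    intro j idx
    by_cases h : idx = j
    · rw [if_pos h]
      have h' : ∀ i, idx i = j i := fun i => congrFun h i
      have hfac : ∀ i, v j i (idx i) = if i = i0 then T j else 1 := by
        intro i; by_cases hi : i = i0 <;> simp [hv, hi, h']
      rw [Outer]
      rw [Finset.prod_congr rfl (fun i _ => hfac i)]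
      simp
    · rw [if_neg h]
      obtain ⟨i1, hi1⟩ : ∃ i1, idx i1 ≠ j i1 := by
        by_contra hc
        push_neg at hc
        exact h (funext hc)
      apply Finset.prod_eq_zero (Finset.mem_univ i1)
      by_cases hi : i1 = i0
      · subst hi; simp [hv, hi1]
      · simp [hv, hi, hi1]
  have hT : T = ∑ j : Fin K → Fin M, Outer (v j) := by
    funext idx
    have : ∀ j, Outer (v j) idx = if idx = j then T j else 0 := fun j => key j idx
    simp only [Finset.sum_apply]
    rw [Finset.sum_congr rfl (fun j _ => this j)]
    simp
  obtain ⟨r, hr, _⟩ := exists_mem_rankSet_of_sum Finset.univ v T hT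
  exact ⟨r, hr⟩

lemma tensorRank_mem (hK : K ≠ 0) (T : (Fin K → Fin M) → ℂ) :
    tensorRank T ∈ RankSet T := Nat.sInf_mem (rankSet_nonempty hK T)

end Tensor
section Tensor2

open Finset

variable {K M : ℕ}

lemma tensorRank_pos_of_ne (hK : K ≠ 0) (T : (Fin K → Fin M) → ℂ)
    (idx0 : Fin K → Fin M) (h : T idx0 ≠ 0) : 1 ≤ tensorRank T := by
  by_contra hc
  push_neg at hc
  interval_cases h' : tensorRank T
  obtain ⟨f, _, hsum⟩ := h' ▸ tensorRank_mem hK T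
  apply h
  rw [hsum]
  simp

lemma substitution (hK : K ≠ 0) (T : (Fin K → Fin M) → ℂ) (p : Fin K) (t : Fin M)
    (idx0 : Fin K → Fin M) (h0 : idx0 p = t) (hT0 : T idx0 ≠ 0) :
    ∃ μ : Fin M → ℂ, tensorRank (fun idx => if idx p = t then 0
        else T idx - μ (idx p) * T (Function.update idx p t)) + 1 ≤ tensorRank T := by
  classical
  obtain ⟨f, hf, hsum⟩ := tensorRank_mem hK T
  have hv : ∀ s, ∃ v : Fin K → Fin M → ℂ, ∀ j, f s j = ∏ i, v i (j i) := fun s => (hf s).2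
  choose v hvs using hv
  have hex : ∃ s0, f s0 idx0 ≠ 0 := by
    by_contra hc
    push_neg at hc
    apply hT0
    have := congrFun hsum idx0
    simp only [Finset.sum_apply] at this
    rw [this]
    exact Finset.sum_eq_zero (fun s _ => hc s)
  obtain ⟨s0, hs0⟩ := hex
  have hvp : v s0 p t ≠ 0 := by
    rw [hvs s0 idx0] at hs0
    have := Finset.prod_ne_zero_iff.mp hs0 p (Finset.mem_univ p)
    rwa [h0] at this
  set μ : Fin M → ℂ := fun x => v s0 p x / v s0 p t with hμ
  refine ⟨μ, ?_⟩
  set w : Fin (tensorRank T) → Fin K → Fin M → ℂ := fun s i x =>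
    if i = p then (if x = t then 0 else v s p x - μ x * v s p t) else v s i x with hw
  have hOuter : ∀ s idx, idx p ≠ t →
      Outer (w s) idx = f s idx - μ (idx p) * f s (Function.update idx p t) := by
    intro s idx hne
    rw [hvs, hvs, Outer]
    have h1 : ∀ g : Fin K → ℂ, ∏ i, g i = g p * ∏ i ∈ Finset.univ.erase p, g i :=
      fun g => (Finset.mul_prod_erase Finset.univ g (Finset.mem_univ p)).symm
    rw [h1, h1 (fun i => v s i (idx i)), h1 (fun i => v s i (Function.update idx p t i))]
    have e1 : ∀ i ∈ Finset.univ.erase p, w s i (idx i) = v s i (idx i) := by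
      intro i hi
      rw [hw]
      simp only [if_neg (Finset.mem_erase.mp hi).1]
    have e2 : ∀ i ∈ Finset.univ.erase p,
        v s i (Function.update idx p t i) = v s i (idx i) := by
      intro i hi
      rw [Function.update_of_ne (Finset.mem_erase.mp hi).1]
    rw [Finset.prod_congr rfl e1, Finset.prod_congr rfl e2]
    have e3 : w s p (idx p) = v s p (idx p) - μ (idx p) * v s p t := by
      simp [hw, hne]
    rw [e3, Function.update_self]
    ring
  have hfac : ∀ x, w s0 p x = 0 := by
    intro x
    rw [hw]
    simp only [if_pos rfl]
    by_cases hx : x = t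
    · simp [hx]
    · rw [if_neg hx, hμ]
      simp [div_mul_cancel₀ _ hvp]
  have hzero : Outer (w s0) = 0 := by
    funext idx
    exact Finset.prod_eq_zero (Finset.mem_univ p) (hfac (idx p))
  have hT' : (fun idx => if idx p = t then 0
      else T idx - μ (idx p) * T (Function.update idx p t))
      = ∑ s ∈ Finset.univ.erase s0, Outer (w s) := by
    funext idx
    by_cases hne : idx p = t
    · rw [if_pos hne]
      simp only [Finset.sum_apply]
      symm
      apply Finset.sum_eq_zero
      intro s _
      apply Finset.prod_eq_zero (Finset.mem_univ p)
      rw [hw]; simp [hne]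
    · rw [if_neg hne]
      have hfull : ∑ s ∈ Finset.univ.erase s0, Outer (w s) = ∑ s, Outer (w s) := by
        rw [← Finset.add_sum_erase Finset.univ _ (Finset.mem_univ s0), hzero]
        simp
      rw [hfull]
      simp only [Finset.sum_apply]
      rw [Finset.sum_congr rfl (fun s _ => hOuter s idx hne)]
      rw [Finset.sum_sub_distrib, ← Finset.mul_sum]
      have hTidx := congrFun hsum idx
      simp only [Finset.sum_apply] at hTidx
      have hTup := congrFun hsum (Function.update idx p t)
      simp only [Finset.sum_apply] at hTup
      rw [hTidx, hTup]
  have hle := tensorRank_le_card (Finset.univ.erase s0) w _ hT'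
  have hcard : (Finset.univ.erase s0).card = tensorRank T - 1 := by
    rw [Finset.card_erase_of_mem (Finset.mem_univ s0), Finset.card_univ, Fintype.card_fin]
  have hr1 : 1 ≤ tensorRank T := tensorRank_pos_of_ne hK T idx0 hT0
  rw [hcard] at hle
  exact (Nat.le_sub_iff_add_le hr1).mp hle

lemma tensorRank_proj_le (hK : K ≠ 0) (T : (Fin K → Fin M) → ℂ) (t : Fin M) :
    tensorRank (fun idx => if ∀ p, idx p ≠ t then T idx else 0) ≤ tensorRank T := by
  classical
  obtain ⟨f, hf, hsum⟩ := tensorRank_mem hK T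
  have hv : ∀ s, ∃ v : Fin K → Fin M → ℂ, ∀ j, f s j = ∏ i, v i (j i) := fun s => (hf s).2
  choose v hvs using hv
  set w : Fin (tensorRank T) → Fin K → Fin M → ℂ := fun s i x =>
    if x = t then 0 else v s i x with hw
  have hT' : (fun idx => if ∀ p, idx p ≠ t then T idx else 0)
      = ∑ s, Outer (w s) := by
    funext idx
    by_cases h : ∀ p, idx p ≠ t
    · rw [if_pos h]
      simp only [Finset.sum_apply]
      have hTidx := congrFun hsum idx
      simp only [Finset.sum_apply] at hTidx
      rw [hTidx]
      apply Finset.sum_congr rfl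
      intro s _
      rw [hvs, Outer]
      apply Finset.prod_congr rfl
      intro i _
      rw [hw]
      simp only [if_neg (h i)]
    · rw [if_neg h]
      push_neg at h
      obtain ⟨p, hp⟩ := h
      simp only [Finset.sum_apply]
      symm
      apply Finset.sum_eq_zero
      intro s _
      apply Finset.prod_eq_zero (Finset.mem_univ p)
      rw [hw]; simp [hp]
  have := tensorRank_le_card Finset.univ w _ hT'
  simpa using this

end Tensor2
section ClassW

open Finset

variable {k m : ℕ}

def Ind1 {ι : Type*} {m : ℕ} (v : Fin (m+1)) (idx : ι → Fin (m+1)) : Prop :=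
  ∃ p, idx p = v ∧ ∀ p' ≠ p, idx p' = 0

def Ind2 {ι : Type*} {m : ℕ} (v : Fin (m+1)) (idx : ι → Fin (m+1)) : Prop :=
  ∃ p1 p2, p1 ≠ p2 ∧ idx p1 = v ∧ idx p2 = v ∧ ∀ p, p ≠ p1 → p ≠ p2 → idx p = 0

def OmegaP (k m : ℕ) (idx : Fin (k+3) → Fin (m+1)) : Prop :=
  ∀ p : Fin (k+3), 2 ≤ (p : ℕ) → idx p = 0

open scoped Classical in
noncomputable def Dt (k m : ℕ) (c e : Fin (m+1) → ℂ) : (Fin (k+3) → Fin (m+1)) → ℂ :=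
  fun idx => (∑ v, c v * (if Ind1 v idx then 1 else 0))
    + (∑ v, e v * (if Ind2 v idx then 1 else 0))

open scoped Classical in
noncomputable def Wt (k m : ℕ) (c e : Fin (m+1) → ℂ) (M : Fin (m+1) → Fin (m+1) → ℂ) :
    (Fin (k+3) → Fin (m+1)) → ℂ := fun idx =>
  if OmegaP k m idx then M (idx ⟨0, by omega⟩) (idx ⟨1, by omega⟩) else Dt k m c e idx

/-- positions -/
def pp0 (k : ℕ) : Fin (k+3) := ⟨0, by omega⟩
def pp1 (k : ℕ) : Fin (k+3) := ⟨1, by omega⟩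
def pp2 (k : ℕ) : Fin (k+3) := ⟨2, by omega⟩

lemma pp01 : pp0 k ≠ pp1 k := by simp [pp0, pp1, Fin.ext_iff]
lemma pp02 : pp0 k ≠ pp2 k := by simp [pp0, pp2, Fin.ext_iff]
lemma pp12 : pp1 k ≠ pp2 k := by simp [pp1, pp2, Fin.ext_iff]
lemma pp0_low : ¬ 2 ≤ ((pp0 k : Fin (k+3)) : ℕ) := by simp [pp0]
lemma pp1_low : ¬ 2 ≤ ((pp1 k : Fin (k+3)) : ℕ) := by simp [pp1]
lemma pp2_high : 2 ≤ ((pp2 k : Fin (k+3)) : ℕ) := by simp [pp2]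

lemma Wt_of_omega {c e : Fin (m+1) → ℂ} {M : Fin (m+1) → Fin (m+1) → ℂ}
    {idx : Fin (k+3) → Fin (m+1)} (h : OmegaP k m idx) :
    Wt k m c e M idx = M (idx (pp0 k)) (idx (pp1 k)) := by
  rw [Wt, if_pos h]; rfl

lemma Wt_of_not_omega {c e : Fin (m+1) → ℂ} {M : Fin (m+1) → Fin (m+1) → ℂ}
    {idx : Fin (k+3) → Fin (m+1)} (h : ¬ OmegaP k m idx) :
    Wt k m c e M idx = Dt k m c e idx := by
  rw [Wt, if_neg h]

lemma Dt_eq_zero_of_not {c e : Fin (m+1) → ℂ} {idx : Fin (k+3) → Fin (m+1)}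
    (h1 : ∀ v, ¬ Ind1 v idx) (h2 : ∀ v, ¬ Ind2 v idx) :
    Dt k m c e idx = 0 := by
  classical
  rw [Dt]
  rw [Finset.sum_eq_zero, Finset.sum_eq_zero, add_zero]
  · intro v _; simp [h2 v]
  · intro v _; simp [h1 v]

lemma omega_update {t : Fin (m+1)} {idx : Fin (k+3) → Fin (m+1)} {pa : Fin (k+3)}
    (hpa : ¬ 2 ≤ (pa : ℕ)) :
    OmegaP k m (Function.update idx pa t) ↔ OmegaP k m idx := by
  constructor <;> intro h p hp
  · have hne : p ≠ pa := fun hc => hpa (hc ▸ hp)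
    have := h p hp
    rwa [Function.update_of_ne hne] at this
  · have hne : p ≠ pa := fun hc => hpa (hc ▸ hp)
    rw [Function.update_of_ne hne]
    exact h p hp

lemma Dt_update_one_zero {c e : Fin (m+1) → ℂ} {idx : Fin (k+3) → Fin (m+1)}
    {t : Fin (m+1)} (ht : t ≠ 0) {pa : Fin (k+3)} (hpa : ¬ 2 ≤ (pa : ℕ))
    (hnot : ¬ OmegaP k m idx) (hallt : ∀ p, idx p ≠ t) :
    Dt k m c e (Function.update idx pa t) = 0 := by
  classical
  set idx' := Function.update idx pa t with hidx'
  have hpaval : idx' pa = t := Function.update_self pa t idx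
  have hother : ∀ p, p ≠ pa → idx' p = idx p := fun p hp => Function.update_of_ne hp t idx
  apply Dt_eq_zero_of_not
  · rintro v ⟨p, hp, hoth⟩
    by_cases hppa : p = pa
    · apply hnot
      intro p' hp'
      have hne : p' ≠ pa := fun hc => hpa (hc ▸ hp')
      have := hoth p' (fun hc => hne (hc.trans hppa))
      rwa [hother p' hne] at this
    · have := hoth pa (fun hc => hppa hc.symm)
      rw [hpaval] at this
      exact ht this
  · rintro v ⟨P1, P2, hne, h1, h2, hoth⟩
    by_cases hP1 : pa = P1
    · have hP2 : P2 ≠ pa := fun hc => hne (hP1.symm.trans hc.symm)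
      rw [hother P2 hP2] at h2
      rw [← hP1, hpaval] at h1
      rw [← h1] at h2
      exact hallt P2 h2
    · by_cases hP2 : pa = P2
      · have hP1' : P1 ≠ pa := fun hc => hne (hc.trans hP2)
        rw [hother P1 hP1'] at h1
        rw [← hP2, hpaval] at h2
        rw [← h2] at h1
        exact hallt P1 h1
      · have := hoth pa hP1 hP2
        rw [hpaval] at this
        exact ht this

lemma Dt_update_two_zero {c e : Fin (m+1) → ℂ} {idx : Fin (k+3) → Fin (m+1)}
    {t : Fin (m+1)} (ht : t ≠ 0) {pa pb : Fin (k+3)} (hpa : ¬ 2 ≤ (pa : ℕ))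
    (hpb : ¬ 2 ≤ (pb : ℕ)) (hab : pa ≠ pb)
    (hnot : ¬ OmegaP k m idx) :
    Dt k m c e (Function.update (Function.update idx pa t) pb t) = 0 := by
  classical
  set idx' := Function.update (Function.update idx pa t) pb t with hidx'
  have hvb : idx' pb = t := by rw [hidx']; exact Function.update_self _ _ _
  have hva : idx' pa = t := by
    rw [hidx', Function.update_of_ne hab]
    exact Function.update_self pa t idx
  have hother : ∀ p, p ≠ pa → p ≠ pb → idx' p = idx p := by
    intro p h1 h2
    rw [hidx', Function.update_of_ne h2, Function.update_of_ne h1]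
  apply Dt_eq_zero_of_not
  · rintro v ⟨p, hp, hoth⟩
    by_cases hppa : p = pa
    · have hbp : pb ≠ p := fun hc => hab (hc.trans hppa).symm
      have := hoth pb hbp
      rw [hvb] at this
      exact ht this
    · have := hoth pa (fun hc => hppa hc.symm)
      rw [hva] at this
      exact ht this
  · rintro v ⟨P1, P2, hne, h1, h2, hoth⟩
    have hain : pa = P1 ∨ pa = P2 := by
      by_contra hc
      push_neg at hc
      have := hoth pa hc.1 hc.2
      rw [hva] at this
      exact ht this
    have hbin : pb = P1 ∨ pb = P2 := by
      by_contra hc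
      push_neg at hc
      have := hoth pb hc.1 hc.2
      rw [hvb] at this
      exact ht this
    apply hnot
    intro p hp
    have hppa : p ≠ pa := fun hc => hpa (hc ▸ hp)
    have hppb : p ≠ pb := fun hc => hpb (hc ▸ hp)
    have hP : p ≠ P1 ∧ p ≠ P2 := by
      rcases hain with h | h <;> rcases hbin with h' | h'
      · exact absurd (h.trans h'.symm) hab
      · exact ⟨h ▸ hppa, h' ▸ hppb⟩
      · exact ⟨h' ▸ hppb, h ▸ hppa⟩
      · exact absurd (h.trans h'.symm) hab
    have := hoth p hP.1 hP.2
    rwa [hother p hppa hppb] at this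

lemma Dt_congr_avoid {c e : Fin (m+1) → ℂ} {idx : Fin (k+3) → Fin (m+1)}
    {t : Fin (m+1)} (hallt : ∀ p, idx p ≠ t) :
    Dt k m (fun v => if v = t then 0 else c v) (fun v => if v = t then 0 else e v) idx
      = Dt k m c e idx := by
  classical
  rw [Dt, Dt]
  congr 1
  · apply Finset.sum_congr rfl
    intro v _
    by_cases hv : v = t
    · subst hv
      have : ¬ Ind1 v idx := by
        rintro ⟨p, hp, -⟩
        exact hallt p hp
      simp [this]
    · rw [if_neg hv]
  · apply Finset.sum_congr rfl
    intro v _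
    by_cases hv : v = t
    · subst hv
      have : ¬ Ind2 v idx := by
        rintro ⟨P1, -, -, hp, -⟩
        exact hallt P1 hp
      simp [this]
    · rw [if_neg hv]

lemma Dt_two_val (c e : Fin (m+1) → ℂ) (pa pb : Fin (k+3)) (hab : pa ≠ pb)
    (t : Fin (m+1)) (ht : t ≠ 0) :
    Dt k m c e (fun p => if p = pa ∨ p = pb then t else 0) = e t := by
  classical
  set idx : Fin (k+3) → Fin (m+1) := fun p => if p = pa ∨ p = pb then t else 0 with hidx
  have hpa : idx pa = t := if_pos (Or.inl rfl)
  have hpb : idx pb = t := if_pos (Or.inr rfl)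
  have hz : ∀ p, p ≠ pa → p ≠ pb → idx p = 0 := by
    intro p h1 h2
    exact if_neg (by tauto)
  have hmem : ∀ p, idx p ≠ 0 → (p = pa ∨ p = pb) := by
    intro p h
    by_contra hc
    push_neg at hc
    exact h (hz p hc.1 hc.2)
  have hInd1 : ∀ v, ¬ Ind1 v idx := by
    rintro v ⟨p, hp, hoth⟩
    by_cases h : pa = p
    · have hb : pb ≠ p := fun hc => hab (h.trans hc.symm)
      have := hoth pb hb
      rw [hpb] at this
      exact ht this
    · have := hoth pa h
      rw [hpa] at this
      exact ht this
  have hInd2t : Ind2 t idx := ⟨pa, pb, hab, hpa, hpb, fun p h1 h2 => hz p h1 h2⟩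
  have hInd2 : ∀ v, v ≠ t → ¬ Ind2 v idx := by
    rintro v hv ⟨P1, P2, hne, h1, h2, hoth⟩
    by_cases hv0 : v = 0
    · subst hv0
      have hP1a : pa ≠ P1 := by
        intro h
        rw [← h, hpa] at h1
        exact ht h1
      have hP1b : pa ≠ P2 := by
        intro h
        rw [← h, hpa] at h2
        exact ht h2
      have := hoth pa hP1a hP1b
      rw [hpa] at this
      exact ht this
    · have := hmem P1 (by rw [h1]; exact hv0)
      rcases this with h | h
      · rw [h, hpa] at h1
        exact hv h1.symm
      · rw [h, hpb] at h1
        exact hv h1.symm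
  rw [Dt]
  rw [Finset.sum_eq_zero (fun v _ => by simp [hInd1 v]), zero_add]
  rw [Finset.sum_eq_single t]
  · simp [hInd2t]
  · intro v _ hv
    simp [hInd2 v hv]
  · intro h
    exact absurd (Finset.mem_univ t) h

lemma Dt_three_val (c e : Fin (m+1) → ℂ) (pa pb pc : Fin (k+3))
    (hab : pa ≠ pb) (hac : pa ≠ pc) (hbc : pb ≠ pc)
    (t : Fin (m+1)) (ht : t ≠ 0) :
    Dt k m c e (fun p => if p = pa ∨ p = pb ∨ p = pc then t else 0) = 0 := by
  classical
  set idx : Fin (k+3) → Fin (m+1) := fun p => if p = pa ∨ p = pb ∨ p = pc then t else 0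
    with hidx
  have hpa : idx pa = t := if_pos (Or.inl rfl)
  have hpb : idx pb = t := if_pos (Or.inr (Or.inl rfl))
  have hpc : idx pc = t := if_pos (Or.inr (Or.inr rfl))
  apply Dt_eq_zero_of_not
  · rintro v ⟨p, hp, hoth⟩
    by_cases h : pa = p
    · have hb : pb ≠ p := fun hc => hab (h.trans hc.symm)
      have := hoth pb hb
      rw [hpb] at this
      exact ht this
    · have := hoth pa h
      rw [hpa] at this
      exact ht this
  · rintro v ⟨P1, P2, hne, h1, h2, hoth⟩
    have key : ∃ px, idx px = t ∧ px ≠ P1 ∧ px ≠ P2 := by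
      by_cases ha1 : pa = P1
      · by_cases hb2 : pb = P2
        · exact ⟨pc, hpc, fun h => hac (h.trans ha1.symm).symm, fun h => hbc (h.trans hb2.symm).symm⟩
        · refine ⟨pb, hpb, ?_, hb2⟩
          intro h
          exact hab (h.trans ha1.symm).symm
      · by_cases ha2 : pa = P2
        · by_cases hb1 : pb = P1
          · refine ⟨pc, hpc, ?_, ?_⟩
            · intro h; exact hbc.symm (h.trans hb1.symm)
            · intro h; exact hac.symm (h.trans ha2.symm)
          · exact ⟨pb, hpb, hb1, fun h => hab (h.trans ha2.symm).symm⟩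
        · exact ⟨pa, hpa, ha1, ha2⟩
    obtain ⟨px, hpx, hx1, hx2⟩ := key
    have := hoth px hx1 hx2
    rw [hpx] at this
    exact ht this

end ClassW
section ClassW2

open Finset

variable {k m : ℕ}

lemma pp_low (p : Fin (k+3)) (h : ¬ 2 ≤ (p : ℕ)) : p = pp0 k ∨ p = pp1 k := by
  have : (p : ℕ) = 0 ∨ (p : ℕ) = 1 := by omega
  rcases this with h0 | h1
  · left; exact Fin.ext h0
  · right; exact Fin.ext h1

lemma Wt_two_val (c e : Fin (m+1) → ℂ) (M : Fin (m+1) → Fin (m+1) → ℂ)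
    (pa pb : Fin (k+3)) (hab : pa ≠ pb) (hb : 2 ≤ ((pb : Fin (k+3)) : ℕ))
    (t : Fin (m+1)) (ht : t ≠ 0) :
    Wt k m c e M (fun p => if p = pa ∨ p = pb then t else 0) = e t := by
  have hnot : ¬ OmegaP k m (fun p => if p = pa ∨ p = pb then t else 0) := by
    intro h
    have h2 : (if pb = pa ∨ pb = pb then t else 0) = 0 := h pb hb
    rw [if_pos (Or.inr rfl)] at h2
    exact ht h2
  rw [Wt_of_not_omega hnot, Dt_two_val c e pa pb hab t ht]

lemma Wt_three_val (c e : Fin (m+1) → ℂ) (M : Fin (m+1) → Fin (m+1) → ℂ)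
    (pa pb pc : Fin (k+3)) (hab : pa ≠ pb) (hac : pa ≠ pc) (hbc : pb ≠ pc)
    (hc2 : 2 ≤ ((pc : Fin (k+3)) : ℕ)) (t : Fin (m+1)) (ht : t ≠ 0) :
    Wt k m c e M (fun p => if p = pa ∨ p = pb ∨ p = pc then t else 0) = 0 := by
  have hnot : ¬ OmegaP k m (fun p => if p = pa ∨ p = pb ∨ p = pc then t else 0) := by
    intro h
    have h2 : (if pc = pa ∨ pc = pb ∨ pc = pc then t else 0) = 0 := h pc hc2
    rw [if_pos (Or.inr (Or.inr rfl))] at h2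
    exact ht h2
  rw [Wt_of_not_omega hnot, Dt_three_val c e pa pb pc hab hac hbc t ht]

lemma Dt_contains_zero {c e : Fin (m+1) → ℂ} {idx : Fin (k+3) → Fin (m+1)}
    {t : Fin (m+1)} (ht : t ≠ 0) (hct : c t = 0) (het : e t = 0)
    {p : Fin (k+3)} (hp : idx p = t) :
    Dt k m c e idx = 0 := by
  classical
  rw [Dt]
  rw [Finset.sum_eq_zero, Finset.sum_eq_zero, add_zero]
  · intro v _
    by_cases hv : v = t
    · rw [hv, het, zero_mul]
    · have : ¬ Ind2 v idx := by
        rintro ⟨P1, P2, hne, h1, h2, hoth⟩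
        by_cases hp1 : p = P1
        · rw [hp1, h1] at hp; exact hv hp
        · by_cases hp2 : p = P2
          · rw [hp2, h2] at hp; exact hv hp
          · have := hoth p hp1 hp2
            rw [hp] at this
            exact ht this
      simp [this]
  · intro v _
    by_cases hv : v = t
    · rw [hv, hct, zero_mul]
    · have : ¬ Ind1 v idx := by
        rintro ⟨p', hp', hoth⟩
        by_cases hpp : p = p'
        · rw [hpp, hp'] at hp; exact hv hp
        · have := hoth p hpp
          rw [hp] at this
          exact ht this
      simp [this]

theorem rank_Wt (k m : ℕ) (s : ℕ) : ∀ (c e : Fin (m+1) → ℂ)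
    (M : Fin (m+1) → Fin (m+1) → ℂ),
    (Finset.univ.filter (fun v => v ≠ 0 ∧ e v ≠ 0)).card = s →
    2 * s ≤ tensorRank (Wt k m c e M) := by
  induction s with
  | zero => intro c e M _; exact Nat.zero_le _
  | succ s ih =>
    intro c e M hcard
    classical
    have hKne : k + 3 ≠ 0 := by omega
    have hnonempty : (Finset.univ.filter (fun v => v ≠ 0 ∧ e v ≠ 0)).Nonempty := by
      rw [← Finset.card_pos, hcard]; omega
    obtain ⟨t, htmem⟩ := hnonempty
    obtain ⟨ht0, het⟩ := (Finset.mem_filter.mp htmem).2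
    set T := Wt k m c e M with hT
    -- first substitution at position pp0
    have hT0 : T (fun p => if p = pp0 k ∨ p = pp2 k then t else 0) ≠ 0 := by
      rw [hT, Wt_two_val c e M _ _ pp02 pp2_high t ht0]
      exact het
    obtain ⟨μ, hμ⟩ := substitution hKne T (pp0 k) t _ (if_pos (Or.inl rfl)) hT0
    set T1 : (Fin (k+3) → Fin (m+1)) → ℂ := fun idx => if idx (pp0 k) = t then 0
        else T idx - μ (idx (pp0 k)) * T (Function.update idx (pp0 k) t) with hT1
    -- second substitution at position pp1
    set idx1 : Fin (k+3) → Fin (m+1) := fun p => if p = pp1 k ∨ p = pp2 k then t else 0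
      with hidx1
    have hidx1pp0 : idx1 (pp0 k) = 0 := by
      rw [hidx1]
      exact if_neg (by push_neg; exact ⟨pp01, pp02⟩)
    have hupd : Function.update idx1 (pp0 k) t
        = fun p => if p = pp0 k ∨ p = pp1 k ∨ p = pp2 k then t else 0 := by
      funext p
      by_cases h : p = pp0 k
      · rw [h, Function.update_self, if_pos (Or.inl rfl)]
      · rw [Function.update_of_ne h]
        show (if p = pp1 k ∨ p = pp2 k then t else 0)
          = if p = pp0 k ∨ p = pp1 k ∨ p = pp2 k then t else 0
        by_cases h1 : p = pp1 k ∨ p = pp2 k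
        · rw [if_pos h1, if_pos (Or.inr h1)]
        · rw [if_neg h1, if_neg (by tauto)]
    have hT1v : T1 idx1 ≠ 0 := by
      rw [hT1]
      simp only
      rw [if_neg (by rw [hidx1pp0]; exact fun hc => ht0 hc.symm)]
      rw [hidx1pp0, hupd, hT]
      rw [Wt_two_val c e M _ _ pp12 pp2_high t ht0]
      rw [Wt_three_val c e M _ _ _ pp01 pp02 pp12 pp2_high t ht0]
      rw [mul_zero, sub_zero]
      exact het
    obtain ⟨ν, hν⟩ := substitution hKne T1 (pp1 k) t idx1 (if_pos (Or.inl rfl)) hT1v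
    set T2 : (Fin (k+3) → Fin (m+1)) → ℂ := fun idx => if idx (pp1 k) = t then 0
        else T1 idx - ν (idx (pp1 k)) * T1 (Function.update idx (pp1 k) t) with hT2
    have hproj := tensorRank_proj_le hKne T2 t
    -- identification of the projected tensor
    set c' : Fin (m+1) → ℂ := fun v => if v = t then 0 else c v with hc'
    set e' : Fin (m+1) → ℂ := fun v => if v = t then 0 else e v with he'
    set M' : Fin (m+1) → Fin (m+1) → ℂ := fun x y => if x = t ∨ y = t then 0
        else M x y - μ x * M t y - ν y * M x t + μ x * ν y * M t t with hM'
    have hct' : c' t = 0 := by rw [hc']; simp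
    have het' : e' t = 0 := by rw [he']; simp
    have hid : (fun idx => if ∀ p, idx p ≠ t then T2 idx else 0) = Wt k m c' e' M' := by
      funext idx
      by_cases hall : ∀ p, idx p ≠ t
      · rw [if_pos hall]
        have h0 : ¬ idx (pp0 k) = t := hall _
        have h1 : ¬ idx (pp1 k) = t := hall _
        have hu0 : ¬ (Function.update idx (pp1 k) t) (pp0 k) = t := by
          rw [Function.update_of_ne pp01]
          exact h0
        rw [hT2]
        simp only
        rw [if_neg h1, hT1]
        simp only
        rw [if_neg h0, if_neg hu0]
        rw [Function.update_of_ne pp01]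
        by_cases hom : OmegaP k m idx
        · have hom0 : OmegaP k m (Function.update idx (pp0 k) t) :=
            (omega_update pp0_low).mpr hom
          have hom1 : OmegaP k m (Function.update idx (pp1 k) t) :=
            (omega_update pp1_low).mpr hom
          have hom01 : OmegaP k m
              (Function.update (Function.update idx (pp1 k) t) (pp0 k) t) :=
            (omega_update pp0_low).mpr hom1
          rw [hT, Wt_of_omega hom, Wt_of_omega hom0, Wt_of_omega hom1, Wt_of_omega hom01,
            Wt_of_omega hom]
          rw [Function.update_self, Function.update_of_ne pp01.symm,
            Function.update_of_ne pp01, Function.update_self]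
          have hud0 : (Function.update (Function.update idx (pp1 k) t) (pp0 k) t) (pp0 k) = t :=
            Function.update_self _ _ _
          have hud1 : (Function.update (Function.update idx (pp1 k) t) (pp0 k) t) (pp1 k) = t := by
            rw [Function.update_of_ne pp01.symm, Function.update_self]
          rw [hud0, hud1]
          rw [hM']
          simp only
          rw [if_neg (by push_neg; exact ⟨h0, h1⟩)]
          ring
        · have hd0 : Dt k m c e (Function.update idx (pp0 k) t) = 0 :=
            Dt_update_one_zero ht0 pp0_low hom hall
          have hd1 : Dt k m c e (Function.update idx (pp1 k) t) = 0 :=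
            Dt_update_one_zero ht0 pp1_low hom hall
          have hd01 : Dt k m c e (Function.update (Function.update idx (pp1 k) t) (pp0 k) t) = 0 :=
            Dt_update_two_zero ht0 pp1_low pp0_low pp01.symm hom
          have homu0 : ¬ OmegaP k m (Function.update idx (pp0 k) t) := by
            rw [omega_update pp0_low]; exact hom
          have homu1 : ¬ OmegaP k m (Function.update idx (pp1 k) t) := by
            rw [omega_update pp1_low]; exact hom
          have homu01 : ¬ OmegaP k m
              (Function.update (Function.update idx (pp1 k) t) (pp0 k) t) := by
            rw [omega_update pp0_low, omega_update pp1_low]; exact hom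
          rw [hT, Wt_of_not_omega hom, Wt_of_not_omega homu0, Wt_of_not_omega homu1,
            Wt_of_not_omega homu01, Wt_of_not_omega hom]
          rw [hd0, hd1, hd01]
          rw [hc', he', Dt_congr_avoid hall]
          ring
      · rw [if_neg hall]
        push_neg at hall
        obtain ⟨p, hp⟩ := hall
        symm
        by_cases hom : OmegaP k m idx
        · rw [Wt_of_omega hom, hM']
          simp only
          have hlow : idx (pp0 k) = t ∨ idx (pp1 k) = t := by
            by_cases h2 : 2 ≤ (p : ℕ)
            · exact absurd (hom p h2) (by rw [hp]; exact ht0)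
            · rcases pp_low p h2 with h | h
              · left; rw [← h]; exact hp
              · right; rw [← h]; exact hp
          rw [if_pos hlow]
        · rw [Wt_of_not_omega hom]
          exact Dt_contains_zero ht0 hct' het' hp
    rw [hid] at hproj
    have hcard' : (Finset.univ.filter (fun v => v ≠ 0 ∧ e' v ≠ 0)).card = s := by
      have hset : Finset.univ.filter (fun v => v ≠ 0 ∧ e' v ≠ 0)
          = (Finset.univ.filter (fun v => v ≠ 0 ∧ e v ≠ 0)).erase t := by
        ext v
        rw [Finset.mem_erase, Finset.mem_filter, Finset.mem_filter]
        constructor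
        · rintro ⟨hu, hv0, hv⟩
          simp only [he'] at hv
          by_cases hvt : v = t
          · rw [if_pos hvt] at hv; exact absurd rfl hv
          · rw [if_neg hvt] at hv
            exact ⟨hvt, hu, hv0, hv⟩
        · rintro ⟨hvt, hu, hv0, hv⟩
          refine ⟨hu, hv0, ?_⟩
          simp only [he']
          rw [if_neg hvt]
          exact hv
      rw [hset, Finset.card_erase_of_mem htmem, hcard]
      omega
    have hIH := ih c' e' M' hcard'
    calc 2 * (s + 1) = 2 * s + 1 + 1 := by ring
    _ ≤ tensorRank (Wt k m c' e' M') + 1 + 1 := by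
        have := Nat.add_le_add_right (Nat.add_le_add_right hIH 1) 1
        omega
    _ ≤ tensorRank T2 + 1 + 1 := by
        have := Nat.add_le_add_right (Nat.add_le_add_right hproj 1) 1
        omega
    _ ≤ tensorRank T1 + 1 := Nat.add_le_add_right hν 1
    _ ≤ tensorRank T := hμ

end ClassW2
section Deriv

open MvPolynomial Finset

noncomputable def derivs {σ : Type*} [DecidableEq σ] (l : List σ) (p : MvPolynomial σ ℂ) :
    MvPolynomial σ ℂ := l.foldl (fun p i => pderiv i p) p

lemma derivs_nil {σ : Type*} [DecidableEq σ] (p : MvPolynomial σ ℂ) : derivs [] p = p := rfl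

lemma derivs_cons {σ : Type*} [DecidableEq σ] (i : σ) (l : List σ) (p : MvPolynomial σ ℂ) :
    derivs (i :: l) p = derivs l (pderiv i p) := rfl

lemma derivs_add {σ : Type*} [DecidableEq σ] (l : List σ) :
    ∀ p q : MvPolynomial σ ℂ, derivs l (p + q) = derivs l p + derivs l q := by
  induction l with
  | nil => intro p q; rfl
  | cons i l ih =>
    intro p q
    rw [derivs_cons, map_add, ih, derivs_cons, derivs_cons]

lemma derivs_zero {σ : Type*} [DecidableEq σ] (l : List σ) : derivs l 0 = 0 := by
  induction l with
  | nil => rfl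
  | cons i l ih => rw [derivs_cons, map_zero]; exact ih

lemma derivs_sum {σ : Type*} [DecidableEq σ] {ι : Type*} (S : Finset ι)
    (f : ι → MvPolynomial σ ℂ) (l : List σ) :
    derivs l (∑ s ∈ S, f s) = ∑ s ∈ S, derivs l (f s) := by
  classical
  induction S using Finset.induction with
  | empty => simp [derivs_zero]
  | insert _ _ hni ih =>
    rw [Finset.sum_insert hni, Finset.sum_insert hni, derivs_add, ih]

def cnt {σ : Type*} [DecidableEq σ] (v : σ) : List σ → ℕ
  | [] => 0
  | i :: l => (if i = v then 1 else 0) + cnt v l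

lemma cnt_nil {σ : Type*} [DecidableEq σ] (v : σ) : cnt v ([] : List σ) = 0 := rfl

lemma cnt_cons {σ : Type*} [DecidableEq σ] (v i : σ) (l : List σ) :
    cnt v (i :: l) = (if i = v then 1 else 0) + cnt v l := rfl

lemma desc_aux (n c : ℕ) : n * (n - 1).descFactorial c = n.descFactorial (c + 1) := by
  cases n with
  | zero => simp [Nat.zero_descFactorial_succ]
  | succ w => rw [Nat.succ_descFactorial_succ]; simp

lemma eval_derivs_monomial {m : ℕ} (l : List (Fin (m+1))) :
    ∀ (d : Fin (m+1) →₀ ℕ) (a : ℂ),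
    eval (Pi.single (0 : Fin (m+1)) (1:ℂ)) (derivs l (monomial d a))
      = a * ((d 0).descFactorial (cnt 0 l) : ℂ)
        * ∏ v ∈ Finset.univ.erase (0 : Fin (m+1)),
            (if cnt v l = d v then ((d v).factorial : ℂ) else 0) := by
  induction l with
  | nil =>
    intro d a
    rw [derivs_nil, eval_monomial, cnt_nil, Nat.descFactorial_zero, Nat.cast_one, mul_one]
    rw [Finsupp.prod_fintype _ _ (fun i => pow_zero _)]
    rw [← Finset.mul_prod_erase Finset.univ _ (Finset.mem_univ (0 : Fin (m+1)))]
    rw [Pi.single_eq_same, one_pow, one_mul, mul_comm]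
    rw [mul_comm a _]
    congr 1
    apply Finset.prod_congr rfl
    intro v hv
    have hv0 : v ≠ 0 := (Finset.mem_erase.mp hv).1
    rw [Pi.single_eq_of_ne hv0, cnt_nil]
    cases hdv : d v with
    | zero => rw [pow_zero]; simp [hdv]
    | succ w =>
      rw [zero_pow (Nat.succ_ne_zero w)]
      rw [if_neg (by omega)]
  | cons i l ih =>
    intro d a
    rw [derivs_cons, pderiv_monomial, ih]
    by_cases hi : i = (0 : Fin (m+1))
    · subst hi
      rw [cnt_cons, if_pos rfl]
      have h0 : (d - Finsupp.single (0 : Fin (m+1)) (1 : ℕ)) 0 = d 0 - 1 := by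
        rw [Finsupp.tsub_apply, Finsupp.single_eq_same]
      have hprod : ∀ v ∈ Finset.univ.erase (0 : Fin (m+1)),
          (if cnt v l = (d - Finsupp.single (0 : Fin (m+1)) (1 : ℕ)) v then
            (((d - Finsupp.single (0 : Fin (m+1)) (1 : ℕ)) v).factorial : ℂ) else 0)
          = (if cnt v (0 :: l) = d v then ((d v).factorial : ℂ) else 0) := by
        intro v hv
        have hv0 : v ≠ 0 := (Finset.mem_erase.mp hv).1
        have hdv : (d - Finsupp.single (0 : Fin (m+1)) (1 : ℕ)) v = d v := by
          rw [Finsupp.tsub_apply, Finsupp.single_apply, if_neg (fun h => hv0 h.symm)]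
          omega
        have hcnt : cnt v ((0 : Fin (m+1)) :: l) = cnt v l := by
          rw [cnt_cons, if_neg (fun h => hv0 h.symm), zero_add]
        rw [hdv, hcnt]
      rw [Finset.prod_congr rfl hprod]
      rw [h0]
      have : (a * (d 0 : ℂ)) * ((d 0 - 1).descFactorial (cnt 0 l) : ℂ)
          = a * ((d 0).descFactorial (1 + cnt 0 l) : ℂ) := by
        rw [Nat.add_comm 1 (cnt 0 l), ← desc_aux]
        push_cast
        ring
      rw [mul_assoc a _ _] at this ⊢
      rw [this]
    · have h0 : (d - Finsupp.single i (1 : ℕ)) 0 = d 0 := by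
        rw [Finsupp.tsub_apply, Finsupp.single_apply, if_neg hi]
        omega
      have hc0 : cnt 0 (i :: l) = cnt 0 l := by
        rw [cnt_cons, if_neg hi, zero_add]
      rw [h0, hc0]
      have hmem : i ∈ Finset.univ.erase (0 : Fin (m+1)) :=
        Finset.mem_erase.mpr ⟨hi, Finset.mem_univ i⟩
      rw [← Finset.mul_prod_erase _ _ hmem, ← Finset.mul_prod_erase _ _ hmem]
      have hrest : ∀ v ∈ (Finset.univ.erase (0 : Fin (m+1))).erase i,
          (if cnt v l = (d - Finsupp.single i (1 : ℕ)) v then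
            (((d - Finsupp.single i (1 : ℕ)) v).factorial : ℂ) else 0)
          = (if cnt v (i :: l) = d v then ((d v).factorial : ℂ) else 0) := by
        intro v hv
        have hvi : v ≠ i := (Finset.mem_erase.mp hv).1
        have hdv : (d - Finsupp.single i (1 : ℕ)) v = d v := by
          rw [Finsupp.tsub_apply, Finsupp.single_apply, if_neg (fun h => hvi h.symm)]
          omega
        have hcnt : cnt v (i :: l) = cnt v l := by
          rw [cnt_cons, if_neg (fun h => hvi h.symm), zero_add]
        rw [hdv, hcnt]
      rw [Finset.prod_congr rfl hrest]
      have hii : (d - Finsupp.single i (1 : ℕ)) i = d i - 1 := by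
        rw [Finsupp.tsub_apply, Finsupp.single_eq_same]
      rw [hii]
      have hci : cnt i (i :: l) = 1 + cnt i l := by rw [cnt_cons, if_pos rfl]
      rw [hci]
      have key : (a * (d i : ℂ)) * (((d i - 1).factorial : ℂ) *
            (if cnt i l = d i - 1 then (1:ℂ) else 0))
          = a * (((d i).factorial : ℂ) * (if 1 + cnt i l = d i then (1:ℂ) else 0)) := by
        by_cases hdi : d i = 0
        · rw [hdi]
          rw [if_neg (show ¬(1 + cnt i l = 0) by omega)]
          simp
        · obtain ⟨w, hw⟩ := Nat.exists_eq_succ_of_ne_zero hdi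
          rw [hw]
          simp only [show w + 1 - 1 = w from rfl]
          by_cases hc : cnt i l = w
          · rw [if_pos hc, if_pos (by omega)]
            rw [Nat.factorial_succ]
            push_cast
            ring
          · rw [if_neg hc, if_neg (by omega)]
            simp
      have rearrange : ∀ (x y : ℕ) (b : Prop) [Decidable b],
          (if b then ((x:ℕ).factorial : ℂ) else 0) = ((x.factorial : ℂ)) * (if b then (1:ℂ) else 0) := by
        intro x y b _
        by_cases hb : b <;> simp [hb]
      rw [rearrange _ 0 _, rearrange _ 0 _]
      calc a * (d i : ℂ) * ((d 0).descFactorial (cnt 0 l) : ℂ)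
            * (((d i - 1).factorial : ℂ) * (if cnt i l = d i - 1 then (1:ℂ) else 0)
              * ∏ v ∈ (Finset.univ.erase 0).erase i,
                  (if cnt v (i :: l) = d v then ((d v).factorial : ℂ) else 0))
          = ((d 0).descFactorial (cnt 0 l) : ℂ)
            * ((a * (d i : ℂ)) * (((d i - 1).factorial : ℂ)
                * (if cnt i l = d i - 1 then (1:ℂ) else 0)))
            * ∏ v ∈ (Finset.univ.erase 0).erase i,
                  (if cnt v (i :: l) = d v then ((d v).factorial : ℂ) else 0) := by ring
      _ = ((d 0).descFactorial (cnt 0 l) : ℂ)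
            * (a * (((d i).factorial : ℂ) * (if 1 + cnt i l = d i then (1:ℂ) else 0)))
            * ∏ v ∈ (Finset.univ.erase 0).erase i,
                  (if cnt v (i :: l) = d v then ((d v).factorial : ℂ) else 0) := by rw [key]
      _ = a * ((d 0).descFactorial (cnt 0 l) : ℂ)
            * (((d i).factorial : ℂ) * (if 1 + cnt i l = d i then (1:ℂ) else 0)
              * ∏ v ∈ (Finset.univ.erase 0).erase i,
                  (if cnt v (i :: l) = d v then ((d v).factorial : ℂ) else 0)) := by ring

end Deriv
section Bridge

open MvPolynomial Finset

variable {b k : ℕ}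

lemma cnt_ofFn {m : ℕ} : ∀ {K : ℕ} (idx : Fin K → Fin (m+1)) (v : Fin (m+1)),
    cnt v (List.ofFn idx) = (Finset.univ.filter (fun p => idx p = v)).card := by
  intro K
  induction K with
  | zero =>
    intro idx v
    simp [List.ofFn_zero, cnt_nil]
  | succ K ih =>
    intro idx v
    rw [List.ofFn_succ, cnt_cons, ih (fun i => idx i.succ) v]
    rw [Finset.card_filter, Finset.card_filter, Fin.sum_univ_succ]

lemma cnt_eq_zero_iff {K : ℕ} (idx : Fin K → Fin (b+1)) (v : Fin (b+1)) :
    cnt v (List.ofFn idx) = 0 ↔ ∀ p, idx p ≠ v := by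
  rw [cnt_ofFn, Finset.card_eq_zero, Finset.filter_eq_empty_iff]
  simp

lemma sum_cnt (idx : Fin (k+3) → Fin (b+1)) :
    ∑ v, cnt v (List.ofFn idx) = k + 3 := by
  have h1 : ∀ v, cnt v (List.ofFn idx) = (Finset.univ.filter (fun p => idx p = v)).card :=
    fun v => cnt_ofFn idx v
  rw [Finset.sum_congr rfl (fun v _ => h1 v)]
  rw [← Finset.card_eq_sum_card_fiberwise (fun p _ => Finset.mem_univ (idx p))]
  rw [Finset.card_univ, Fintype.card_fin]

lemma desc_succ_self (j : ℕ) : (j+1).descFactorial j = (j+1).factorial := by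
  induction j with
  | zero => rfl
  | succ w ih =>
    rw [Nat.succ_descFactorial_succ, ih, ← Nat.factorial_succ]

lemma ind1_char {K : ℕ} (idx : Fin K → Fin (b+1)) (w : Fin (b+1)) (hw : w ≠ 0) :
    (cnt w (List.ofFn idx) = 1 ∧ ∀ v, v ≠ 0 → v ≠ w → cnt v (List.ofFn idx) = 0)
      ↔ Ind1 w idx := by
  constructor
  · rintro ⟨h1, h2⟩
    rw [cnt_ofFn, Finset.card_eq_one] at h1
    obtain ⟨p, hset⟩ := h1
    have hp : idx p = w := by
      have : p ∈ Finset.univ.filter (fun p' => idx p' = w) := by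
        rw [hset]; exact Finset.mem_singleton_self p
      exact (Finset.mem_filter.mp this).2
    refine ⟨p, hp, ?_⟩
    intro p' hp'
    by_contra hne
    have hvw : idx p' ≠ w := by
      intro hc
      apply hp'
      have : p' ∈ Finset.univ.filter (fun p'' => idx p'' = w) :=
        Finset.mem_filter.mpr ⟨Finset.mem_univ _, hc⟩
      rw [hset] at this
      exact Finset.mem_singleton.mp this
    have := (cnt_eq_zero_iff idx (idx p')).mp (h2 (idx p') hne hvw) p'
    exact this rfl
  · rintro ⟨p, hp, hoth⟩
    constructor
    · rw [cnt_ofFn]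
      have : Finset.univ.filter (fun p' => idx p' = w) = {p} := by
        ext p'
        rw [Finset.mem_filter, Finset.mem_singleton]
        constructor
        · rintro ⟨-, h⟩
          by_contra hc
          rw [hoth p' hc] at h
          exact hw h.symm
        · rintro rfl
          exact ⟨Finset.mem_univ _, hp⟩
      rw [this, Finset.card_singleton]
    · intro v hv0 hvw
      rw [cnt_eq_zero_iff]
      intro p' hc
      by_cases hpp : p' = p
      · rw [hpp, hp] at hc; exact hvw hc.symm
      · rw [hoth p' hpp] at hc; exact hv0 hc.symm

lemma cnt0_of_ind1 (idx : Fin (k+3) → Fin (b+1)) (w : Fin (b+1)) (hw : w ≠ 0)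
    (h : Ind1 w idx) : cnt 0 (List.ofFn idx) = k + 2 := by
  obtain ⟨p, hp, hoth⟩ := h
  rw [cnt_ofFn]
  have : Finset.univ.filter (fun p' => idx p' = 0) = Finset.univ.erase p := by
    ext p'
    rw [Finset.mem_filter, Finset.mem_erase]
    constructor
    · rintro ⟨-, h0⟩
      refine ⟨?_, Finset.mem_univ _⟩
      intro hc
      rw [hc, hp] at h0
      exact hw h0
    · rintro ⟨hne, -⟩
      exact ⟨Finset.mem_univ _, hoth p' hne⟩
  rw [this, Finset.card_erase_of_mem (Finset.mem_univ p), Finset.card_univ, Fintype.card_fin]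
  omega

lemma ind2_char {K : ℕ} (idx : Fin K → Fin (b+1)) (w : Fin (b+1)) (hw : w ≠ 0) :
    (cnt w (List.ofFn idx) = 2 ∧ ∀ v, v ≠ 0 → v ≠ w → cnt v (List.ofFn idx) = 0)
      ↔ Ind2 w idx := by
  constructor
  · rintro ⟨h1, h2⟩
    rw [cnt_ofFn, Finset.card_eq_two] at h1
    obtain ⟨p1, p2, hne, hset⟩ := h1
    have hp1 : idx p1 = w := by
      have : p1 ∈ Finset.univ.filter (fun p' => idx p' = w) := by
        rw [hset]; exact Finset.mem_insert_self _ _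
      exact (Finset.mem_filter.mp this).2
    have hp2 : idx p2 = w := by
      have : p2 ∈ Finset.univ.filter (fun p' => idx p' = w) := by
        rw [hset]; exact Finset.mem_insert.mpr (Or.inr (Finset.mem_singleton_self _))
      exact (Finset.mem_filter.mp this).2
    refine ⟨p1, p2, hne, hp1, hp2, ?_⟩
    intro p hpa hpb
    by_contra hne0
    have hvw : idx p ≠ w := by
      intro hc
      have : p ∈ Finset.univ.filter (fun p' => idx p' = w) :=
        Finset.mem_filter.mpr ⟨Finset.mem_univ _, hc⟩
      rw [hset, Finset.mem_insert, Finset.mem_singleton] at this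
      rcases this with h | h
      · exact hpa h
      · exact hpb h
    have := (cnt_eq_zero_iff idx (idx p)).mp (h2 (idx p) hne0 hvw) p
    exact this rfl
  · rintro ⟨p1, p2, hne, hp1, hp2, hoth⟩
    constructor
    · rw [cnt_ofFn]
      have : Finset.univ.filter (fun p' => idx p' = w) = {p1, p2} := by
        ext p'
        rw [Finset.mem_filter, Finset.mem_insert, Finset.mem_singleton]
        constructor
        · rintro ⟨-, h⟩
          by_contra hc
          push_neg at hc
          rw [hoth p' hc.1 hc.2] at h
          exact hw h.symm
        · rintro (rfl | rfl)
          · exact ⟨Finset.mem_univ _, hp1⟩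
          · exact ⟨Finset.mem_univ _, hp2⟩
      rw [this, Finset.card_pair hne]
    · intro v hv0 hvw
      rw [cnt_eq_zero_iff]
      intro p' hc
      by_cases ha : p' = p1
      · rw [ha, hp1] at hc; exact hvw hc.symm
      · by_cases hb : p' = p2
        · rw [hb, hp2] at hc; exact hvw hc.symm
        · rw [hoth p' ha hb] at hc; exact hv0 hc.symm

lemma cnt0_of_ind2 (idx : Fin (k+3) → Fin (b+1)) (w : Fin (b+1)) (hw : w ≠ 0)
    (h : Ind2 w idx) : cnt 0 (List.ofFn idx) = k + 1 := by
  obtain ⟨p1, p2, hne, hp1, hp2, hoth⟩ := h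
  rw [cnt_ofFn]
  have : Finset.univ.filter (fun p' => idx p' = 0) = (Finset.univ.erase p1).erase p2 := by
    ext p'
    rw [Finset.mem_filter, Finset.mem_erase, Finset.mem_erase]
    constructor
    · rintro ⟨-, h0⟩
      refine ⟨?_, ?_, Finset.mem_univ _⟩
      · intro hc; rw [hc, hp2] at h0; exact hw h0
      · intro hc; rw [hc, hp1] at h0; exact hw h0
    · rintro ⟨hb, ha, -⟩
      exact ⟨Finset.mem_univ _, hoth p' ha hb⟩
  rw [this, Finset.card_erase_of_mem, Finset.card_erase_of_mem (Finset.mem_univ p1),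
    Finset.card_univ, Fintype.card_fin]
  · omega
  · exact Finset.mem_erase.mpr ⟨fun hc => hne hc.symm, Finset.mem_univ _⟩

end Bridge
section Values

open MvPolynomial Finset
open scoped Classical

variable {b k : ℕ}

lemma valA (idx : Fin (k+3) → Fin (b+1)) (α : ℂ) :
    eval (Pi.single (0:Fin (b+1)) (1:ℂ)) (derivs (List.ofFn idx)
      (monomial (Finsupp.single (0:Fin (b+1)) (k+4)) α))
    = α * ((k+4).factorial : ℂ) * (if ∀ p, idx p = 0 then 1 else 0) := by
  classical
  rw [eval_derivs_monomial]
  have hd0 : (Finsupp.single (0:Fin (b+1)) (k+4)) 0 = k+4 := Finsupp.single_eq_same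
  by_cases hall : ∀ p, idx p = 0
  · rw [if_pos hall]
    have hcnt : ∀ v, v ≠ 0 → cnt v (List.ofFn idx) = 0 := by
      intro v hv
      rw [cnt_eq_zero_iff]
      intro p hc
      rw [hall p] at hc
      exact hv hc.symm
    have hcnt0 : cnt 0 (List.ofFn idx) = k+3 := by
      have h1 := sum_cnt idx
      rw [← Finset.add_sum_erase _ _ (Finset.mem_univ (0:Fin (b+1)))] at h1
      rw [Finset.sum_eq_zero (fun v hv => hcnt v (Finset.mem_erase.mp hv).1)] at h1
      omega
    have hdesc : (k+4).descFactorial (k+3) = (k+4).factorial := desc_succ_self (k+3)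
    rw [hcnt0, hd0, hdesc]
    have hprod : ∀ v ∈ Finset.univ.erase (0:Fin (b+1)),
        (if cnt v (List.ofFn idx) = (Finsupp.single (0:Fin (b+1)) (k+4)) v then
          (((Finsupp.single (0:Fin (b+1)) (k+4)) v).factorial : ℂ) else 0) = 1 := by
      intro v hv
      have hv0 : v ≠ 0 := (Finset.mem_erase.mp hv).1
      have hdv : (Finsupp.single (0:Fin (b+1)) (k+4)) v = 0 := by
        rw [Finsupp.single_apply, if_neg (fun h => hv0 h.symm)]
      rw [hdv, hcnt v hv0, if_pos rfl]
      norm_num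
    rw [Finset.prod_congr rfl hprod, Finset.prod_const_one, mul_one]
  · rw [if_neg hall]
    push_neg at hall
    obtain ⟨p, hp⟩ := hall
    have hmem : idx p ∈ Finset.univ.erase (0:Fin (b+1)) :=
      Finset.mem_erase.mpr ⟨hp, Finset.mem_univ _⟩
    have hfac : (if cnt (idx p) (List.ofFn idx)
          = (Finsupp.single (0:Fin (b+1)) (k+4)) (idx p) then
        (((Finsupp.single (0:Fin (b+1)) (k+4)) (idx p)).factorial : ℂ) else 0) = 0 := by
      have hdv : (Finsupp.single (0:Fin (b+1)) (k+4)) (idx p) = 0 := by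
        rw [Finsupp.single_apply, if_neg (fun h => hp h.symm)]
      rw [hdv, if_neg]
      intro hc
      exact (cnt_eq_zero_iff idx (idx p)).mp hc p rfl
    rw [Finset.prod_eq_zero hmem hfac, mul_zero, mul_zero]

lemma valB (idx : Fin (k+3) → Fin (b+1)) (w : Fin (b+1)) (hw : w ≠ 0) (β : ℂ) :
    eval (Pi.single (0:Fin (b+1)) (1:ℂ)) (derivs (List.ofFn idx)
      (monomial (Finsupp.single (0:Fin (b+1)) (k+3) + Finsupp.single w 1) β))
    = β * ((k+3).factorial : ℂ) * (if Ind1 w idx then 1 else 0) := by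
  classical
  set d := Finsupp.single (0:Fin (b+1)) (k+3) + Finsupp.single w 1 with hd
  have hd0 : d 0 = k+3 := by
    rw [hd, Finsupp.add_apply, Finsupp.single_eq_same, Finsupp.single_apply,
      if_neg hw, add_zero]
  have hdw : d w = 1 := by
    rw [hd, Finsupp.add_apply, Finsupp.single_apply, if_neg (fun h => hw h.symm),
      Finsupp.single_eq_same, zero_add]
  have hdv : ∀ v, v ≠ 0 → v ≠ w → d v = 0 := by
    intro v hv0 hvw
    rw [hd, Finsupp.add_apply, Finsupp.single_apply, if_neg (fun h => hv0 h.symm),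
      Finsupp.single_apply, if_neg (fun h => hvw h.symm), add_zero]
  rw [eval_derivs_monomial, hd0]
  have hwmem : w ∈ Finset.univ.erase (0:Fin (b+1)) :=
    Finset.mem_erase.mpr ⟨hw, Finset.mem_univ _⟩
  by_cases h : Ind1 w idx
  · rw [if_pos h]
    obtain ⟨hcw, hcv⟩ := (ind1_char idx w hw).mpr h
    have hc0 : cnt 0 (List.ofFn idx) = k + 2 := cnt0_of_ind1 idx w hw h
    rw [hc0]
    have hdesc : (k+3).descFactorial (k+2) = (k+3).factorial := desc_succ_self (k+2)
    rw [hdesc]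
    rw [← Finset.mul_prod_erase _ _ hwmem]
    rw [hdw, hcw, if_pos rfl]
    have hrest : ∀ v ∈ (Finset.univ.erase (0:Fin (b+1))).erase w,
        (if cnt v (List.ofFn idx) = d v then ((d v).factorial : ℂ) else 0) = 1 := by
      intro v hv
      obtain ⟨hvw, hv'⟩ := Finset.mem_erase.mp hv
      have hv0 : v ≠ 0 := (Finset.mem_erase.mp hv').1
      rw [hdv v hv0 hvw, hcv v hv0 hvw, if_pos rfl]
      norm_num
    rw [Finset.prod_congr rfl hrest, Finset.prod_const_one]
    norm_num
  · rw [if_neg h]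
    have hnot := h ∘ (ind1_char idx w hw).mp
    rw [mul_zero]
    by_cases hcw : cnt w (List.ofFn idx) = 1
    · have : ∃ v, v ≠ 0 ∧ v ≠ w ∧ cnt v (List.ofFn idx) ≠ 0 := by
        by_contra hc
        push_neg at hc
        exact hnot ⟨hcw, fun v h1 h2 => hc v h1 h2⟩
      obtain ⟨v, hv0, hvw, hvc⟩ := this
      have hvmem : v ∈ Finset.univ.erase (0:Fin (b+1)) :=
        Finset.mem_erase.mpr ⟨hv0, Finset.mem_univ _⟩
      have : (if cnt v (List.ofFn idx) = d v then ((d v).factorial : ℂ) else 0) = 0 := by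
        rw [hdv v hv0 hvw, if_neg hvc]
      rw [Finset.prod_eq_zero hvmem this, mul_zero]
    · have : (if cnt w (List.ofFn idx) = d w then ((d w).factorial : ℂ) else 0) = 0 := by
        rw [hdw, if_neg hcw]
      rw [Finset.prod_eq_zero hwmem this, mul_zero]

lemma valC (idx : Fin (k+3) → Fin (b+1)) (w : Fin (b+1)) (hw : w ≠ 0) (γ : ℂ) :
    eval (Pi.single (0:Fin (b+1)) (1:ℂ)) (derivs (List.ofFn idx)
      (monomial (Finsupp.single (0:Fin (b+1)) (k+2) + Finsupp.single w 2) γ))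
    = γ * (2 * ((k+2).factorial : ℂ)) * (if Ind2 w idx then 1 else 0) := by
  classical
  set d := Finsupp.single (0:Fin (b+1)) (k+2) + Finsupp.single w 2 with hd
  have hd0 : d 0 = k+2 := by
    rw [hd, Finsupp.add_apply, Finsupp.single_eq_same, Finsupp.single_apply,
      if_neg hw, add_zero]
  have hdw : d w = 2 := by
    rw [hd, Finsupp.add_apply, Finsupp.single_apply, if_neg (fun h => hw h.symm),
      Finsupp.single_eq_same, zero_add]
  have hdv : ∀ v, v ≠ 0 → v ≠ w → d v = 0 := by
    intro v hv0 hvw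
    rw [hd, Finsupp.add_apply, Finsupp.single_apply, if_neg (fun h => hv0 h.symm),
      Finsupp.single_apply, if_neg (fun h => hvw h.symm), add_zero]
  rw [eval_derivs_monomial, hd0]
  have hwmem : w ∈ Finset.univ.erase (0:Fin (b+1)) :=
    Finset.mem_erase.mpr ⟨hw, Finset.mem_univ _⟩
  by_cases h : Ind2 w idx
  · rw [if_pos h]
    obtain ⟨hcw, hcv⟩ := (ind2_char idx w hw).mpr h
    have hc0 : cnt 0 (List.ofFn idx) = k + 1 := cnt0_of_ind2 idx w hw h
    rw [hc0]
    have hdesc : (k+2).descFactorial (k+1) = (k+2).factorial := desc_succ_self (k+1)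
    rw [hdesc]
    rw [← Finset.mul_prod_erase _ _ hwmem]
    rw [hdw, hcw, if_pos rfl]
    have hrest : ∀ v ∈ (Finset.univ.erase (0:Fin (b+1))).erase w,
        (if cnt v (List.ofFn idx) = d v then ((d v).factorial : ℂ) else 0) = 1 := by
      intro v hv
      obtain ⟨hvw, hv'⟩ := Finset.mem_erase.mp hv
      have hv0 : v ≠ 0 := (Finset.mem_erase.mp hv').1
      rw [hdv v hv0 hvw, hcv v hv0 hvw, if_pos rfl]
      norm_num
    rw [Finset.prod_congr rfl hrest, Finset.prod_const_one]
    have h2 : ((Nat.factorial 2 : ℕ) : ℂ) = 2 := by norm_num [Nat.factorial]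
    rw [mul_one, mul_one, h2]
    ring
  · rw [if_neg h]
    have hnot := h ∘ (ind2_char idx w hw).mp
    rw [mul_zero]
    by_cases hcw : cnt w (List.ofFn idx) = 2
    · have : ∃ v, v ≠ 0 ∧ v ≠ w ∧ cnt v (List.ofFn idx) ≠ 0 := by
        by_contra hc
        push_neg at hc
        exact hnot ⟨hcw, fun v h1 h2 => hc v h1 h2⟩
      obtain ⟨v, hv0, hvw, hvc⟩ := this
      have hvmem : v ∈ Finset.univ.erase (0:Fin (b+1)) :=
        Finset.mem_erase.mpr ⟨hv0, Finset.mem_univ _⟩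
      have : (if cnt v (List.ofFn idx) = d v then ((d v).factorial : ℂ) else 0) = 0 := by
        rw [hdv v hv0 hvw, if_neg hvc]
      rw [Finset.prod_eq_zero hvmem this, mul_zero]
    · have : (if cnt w (List.ofFn idx) = d w then ((d w).factorial : ℂ) else 0) = 0 := by
        rw [hdw, if_neg hcw]
      rw [Finset.prod_eq_zero hwmem this, mul_zero]

lemma valG (idx : Fin (k+3) → Fin (b+1)) (d : Fin (b+1) →₀ ℕ) (hd0 : d 0 = 0)
    (hsum : ∑ v, d v = k+4) (a : ℂ) :
    eval (Pi.single (0:Fin (b+1)) (1:ℂ)) (derivs (List.ofFn idx) (monomial d a)) = 0 := by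
  classical
  rw [eval_derivs_monomial]
  by_cases hc0 : cnt 0 (List.ofFn idx) = 0
  · by_cases hall : ∀ v ∈ Finset.univ.erase (0:Fin (b+1)), cnt v (List.ofFn idx) = d v
    · exfalso
      have h1 := sum_cnt idx
      rw [← Finset.add_sum_erase _ _ (Finset.mem_univ (0:Fin (b+1))), hc0, zero_add] at h1
      rw [Finset.sum_congr rfl hall] at h1
      rw [← Finset.add_sum_erase _ d (Finset.mem_univ (0:Fin (b+1))), hd0, zero_add] at hsum
      have h2 : ∑ v ∈ Finset.univ.erase (0:Fin (b+1)), d v = k + 4 := hsum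
      exact absurd (h1.symm.trans h2) (by omega)
    · push_neg at hall
      obtain ⟨v, hv, hne⟩ := hall
      rw [Finset.prod_eq_zero hv (show (if cnt v (List.ofFn idx) = d v
        then ((d v).factorial : ℂ) else 0) = 0 from if_neg hne), mul_zero]
  · obtain ⟨c, hcc⟩ := Nat.exists_eq_succ_of_ne_zero hc0
    rw [hcc, hd0, Nat.zero_descFactorial_succ]
    norm_num

end Values
section Glue

open MvPolynomial Finset
open scoped Classical

variable {b k m : ℕ}

lemma omega_zero_off {idx : Fin (k+3) → Fin (m+1)} (hΩ : OmegaP k m idx) :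
    ∀ p, p ≠ pp0 k → p ≠ pp1 k → idx p = 0 := by
  intro p h0 h1
  by_cases h2 : 2 ≤ (p : ℕ)
  · exact hΩ p h2
  · rcases pp_low p h2 with h | h
    · exact absurd h h0
    · exact absurd h h1

lemma Dt_omega_val (c e : Fin (m+1) → ℂ) (idx : Fin (k+3) → Fin (m+1))
    (hΩ : OmegaP k m idx) (hc0 : c 0 = 0) (he0 : e 0 = 0) :
    Dt k m c e idx
      = ((if idx (pp1 k) = 0 then c (idx (pp0 k)) else 0)
        + (if idx (pp0 k) = 0 then c (idx (pp1 k)) else 0))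
        + (if idx (pp0 k) = idx (pp1 k) then e (idx (pp0 k)) else 0) := by
  have hz := omega_zero_off hΩ
  rw [Dt]
  congr 1
  -- first sum
  · by_cases hx : idx (pp0 k) = 0 <;> by_cases hy : idx (pp1 k) = 0
    · rw [if_pos hx, if_pos hy, hx, hy, hc0, add_zero]
      apply Finset.sum_eq_zero
      intro v _
      by_cases hv : v = 0
      · rw [hv, hc0, zero_mul]
      · have : ¬ Ind1 v idx := by
          rintro ⟨p, hp, -⟩
          by_cases h0 : p = pp0 k
          · rw [h0, hx] at hp; exact hv hp.symm
          · by_cases h1 : p = pp1 k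
            · rw [h1, hy] at hp; exact hv hp.symm
            · rw [hz p h0 h1] at hp; exact hv hp.symm
        rw [if_neg this, mul_zero]
    · -- x = 0, y ≠ 0
      rw [if_neg hy, if_pos hx, zero_add]
      have hind : Ind1 (idx (pp1 k)) idx := by
        refine ⟨pp1 k, rfl, fun p hp => ?_⟩
        by_cases h0 : p = pp0 k
        · rw [h0]; exact hx
        · exact hz p h0 hp
      have hothers : ∀ v ∈ Finset.univ, v ≠ idx (pp1 k) →
          c v * (if Ind1 v idx then (1:ℂ) else 0) = 0 := by
        intro v _ hv
        have : ¬ Ind1 v idx := by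
          rintro ⟨p, hp, hoth⟩
          by_cases h1 : p = pp1 k
          · rw [h1] at hp; exact hv hp.symm
          · exact hy (hoth (pp1 k) (fun hc => h1 hc.symm))
        rw [if_neg this, mul_zero]
      rw [Finset.sum_eq_single_of_mem (idx (pp1 k)) (Finset.mem_univ _) hothers,
        if_pos hind, mul_one]
    · -- x ≠ 0, y = 0
      rw [if_pos hy, if_neg hx, add_zero]
      have hind : Ind1 (idx (pp0 k)) idx := by
        refine ⟨pp0 k, rfl, fun p hp => ?_⟩
        by_cases h1 : p = pp1 k
        · rw [h1]; exact hy
        · exact hz p hp h1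
      have hothers : ∀ v ∈ Finset.univ, v ≠ idx (pp0 k) →
          c v * (if Ind1 v idx then (1:ℂ) else 0) = 0 := by
        intro v _ hv
        have : ¬ Ind1 v idx := by
          rintro ⟨p, hp, hoth⟩
          by_cases h0 : p = pp0 k
          · rw [h0] at hp; exact hv hp.symm
          · exact hx (hoth (pp0 k) (fun hc => h0 hc.symm))
        rw [if_neg this, mul_zero]
      rw [Finset.sum_eq_single_of_mem (idx (pp0 k)) (Finset.mem_univ _) hothers,
        if_pos hind, mul_one]
    · rw [if_neg hy, if_neg hx, add_zero]
      apply Finset.sum_eq_zero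
      intro v _
      have : ¬ Ind1 v idx := by
        rintro ⟨p, hp, hoth⟩
        by_cases h0 : p = pp0 k
        · exact hy (hoth (pp1 k) (fun hc => pp01 (hc.trans h0).symm))
        · exact hx (hoth (pp0 k) (fun hc => h0 hc.symm))
      rw [if_neg this, mul_zero]
  -- second sum
  · by_cases hxy : idx (pp0 k) = idx (pp1 k)
    · by_cases hx : idx (pp0 k) = 0
      · rw [if_pos hxy, hx, he0]
        apply Finset.sum_eq_zero
        intro v _
        by_cases hv : v = 0
        · rw [hv, he0, zero_mul]
        · have : ¬ Ind2 v idx := by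
            rintro ⟨P1, P2, hne, h1, h2, hoth⟩
            have : idx P1 = 0 := by
              by_cases hP0 : P1 = pp0 k
              · rw [hP0]; exact hx
              · by_cases hP1 : P1 = pp1 k
                · rw [hP1, ← hxy]; exact hx
                · exact hz P1 hP0 hP1
            rw [h1] at this
            exact hv this
          rw [if_neg this, mul_zero]
      · rw [if_pos hxy]
        have hind : Ind2 (idx (pp0 k)) idx :=
          ⟨pp0 k, pp1 k, pp01, rfl, hxy.symm, fun p h0 h1 => hz p h0 h1⟩
        have hothers : ∀ v ∈ Finset.univ, v ≠ idx (pp0 k) →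
            e v * (if Ind2 v idx then (1:ℂ) else 0) = 0 := by
          intro v _ hv
          have : ¬ Ind2 v idx := by
            rintro ⟨P1, P2, hne, h1, h2, hoth⟩
            by_cases hv0 : v = 0
            · have hP1 : P1 ≠ pp0 k := by
                intro hc; rw [hc] at h1; exact hx (h1.trans hv0)
              have hP2 : P2 ≠ pp0 k := by
                intro hc; rw [hc] at h2; exact hx (h2.trans hv0)
              exact hx (hoth (pp0 k) (fun hc => hP1 hc.symm) (fun hc => hP2 hc.symm))
            · have hP1 : P1 = pp0 k ∨ P1 = pp1 k := by
                by_contra hc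
                push_neg at hc
                rw [hz P1 hc.1 hc.2] at h1
                exact hv0 h1.symm
              have : idx P1 = idx (pp0 k) := by
                rcases hP1 with h | h
                · rw [h]
                · rw [h, ← hxy]
              rw [h1] at this
              exact hv this
          rw [if_neg this, mul_zero]
        rw [Finset.sum_eq_single_of_mem (idx (pp0 k)) (Finset.mem_univ _) hothers,
          if_pos hind, mul_one]
    · rw [if_neg hxy]
      apply Finset.sum_eq_zero
      intro v _
      have : ¬ Ind2 v idx := by
        rintro ⟨P1, P2, hne, h1, h2, hoth⟩
        by_cases hv0 : v = 0
        · by_cases hx : idx (pp0 k) = 0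
          · have hy : idx (pp1 k) ≠ 0 := fun hc => hxy (hx.trans hc.symm)
            have hP1 : P1 ≠ pp1 k := by
              intro hc; rw [hc] at h1; exact hy (h1.trans hv0)
            have hP2 : P2 ≠ pp1 k := by
              intro hc; rw [hc] at h2; exact hy (h2.trans hv0)
            exact hy (hoth (pp1 k) (fun hc => hP1 hc.symm) (fun hc => hP2 hc.symm))
          · have hP1 : P1 ≠ pp0 k := by
              intro hc; rw [hc] at h1; exact hx (h1.trans hv0)
            have hP2 : P2 ≠ pp0 k := by
              intro hc; rw [hc] at h2; exact hx (h2.trans hv0)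
            exact hx (hoth (pp0 k) (fun hc => hP1 hc.symm) (fun hc => hP2 hc.symm))
        · have hP1 : P1 = pp0 k ∨ P1 = pp1 k := by
            by_contra hc
            push_neg at hc
            rw [hz P1 hc.1 hc.2] at h1
            exact hv0 h1.symm
          have hP2 : P2 = pp0 k ∨ P2 = pp1 k := by
            by_contra hc
            push_neg at hc
            rw [hz P2 hc.1 hc.2] at h2
            exact hv0 h2.symm
          apply hxy
          rcases hP1 with ha | ha <;> rcases hP2 with hb | hb
          · exact absurd (ha.trans hb.symm) hne
          · rw [← ha, ← hb, h1, h2]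
          · rw [← ha, ← hb, h1, h2]
          · exact absurd (ha.trans hb.symm) hne
      rw [if_neg this, mul_zero]

end Glue
section Final

open MvPolynomial Finset
open scoped Classical

variable {b k : ℕ}

lemma canonical_eq_Wt {k m : ℕ} (a : ℂ) (c e : Fin (m+1) → ℂ) (hc0 : c 0 = 0)
    (he0 : e 0 = 0) (idx : Fin (k+3) → Fin (m+1)) :
    (if ∀ p, idx p = 0 then a else 0) + Dt k m c e idx
      = Wt k m c e (fun x y => (if x = 0 ∧ y = 0 then a else 0)
          + ((if y = 0 then c x else 0) + (if x = 0 then c y else 0))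
          + (if x = y then e x else 0)) idx := by
  by_cases hΩ : OmegaP k m idx
  · rw [Wt_of_omega hΩ, Dt_omega_val c e idx hΩ hc0 he0]
    have h1 : (∀ p, idx p = 0) ↔ (idx (pp0 k) = 0 ∧ idx (pp1 k) = 0) := by
      constructor
      · intro h; exact ⟨h _, h _⟩
      · rintro ⟨h0, h1⟩ p
        by_cases ha : p = pp0 k
        · rw [ha]; exact h0
        · by_cases hb : p = pp1 k
          · rw [hb]; exact h1
          · exact omega_zero_off hΩ p ha hb
    rw [if_congr h1 rfl rfl]
    ring
  · rw [Wt_of_not_omega hΩ]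
    rw [if_neg (fun hall => hΩ (fun p _ => hall p)), zero_add]

noncomputable def cL (b : ℕ) (L : MvPolynomial (Fin b) ℂ) : Fin (b+1) → ℂ :=
  Fin.cases 0 (fun j => MvPolynomial.coeff (Finsupp.single j 1) L)

def eQ (b q : ℕ) : Fin (b+1) → ℂ := fun v => if 1 ≤ (v:ℕ) ∧ (v:ℕ) ≤ q then 1 else 0

lemma cL_zero (L : MvPolynomial (Fin b) ℂ) : cL b L 0 = 0 := by simp [cL]

lemma cL_succ (L : MvPolynomial (Fin b) ℂ) (j : Fin b) :
    cL b L j.succ = MvPolynomial.coeff (Finsupp.single j 1) L := by simp [cL]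

lemma eQ_zero (q : ℕ) : eQ b q 0 = 0 := by simp [eQ]

lemma degree_eq_sum {σ : Type*} [Fintype σ] (d : σ →₀ ℕ) : d.degree = ∑ v, d v :=
  Finset.sum_subset (Finset.subset_univ _)
    (fun x _ hx => Finsupp.notMem_support_iff.mp hx)

lemma degree_mapDomain' {α β : Type*} (f : α → β) (d : α →₀ ℕ) :
    (Finsupp.mapDomain f d).degree = d.degree := by
  have h := Finsupp.sum_mapDomain_index (f := f) (s := d) (h := fun _ (x : ℕ) => x)
    (fun _ => rfl) (fun _ _ _ => rfl)
  exact h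

lemma single_of_degree_one {σ : Type*} (d : σ →₀ ℕ) (h : d.degree = 1) :
    ∃ j, d = Finsupp.single j 1 := by
  classical
  have hsum : ∑ i ∈ d.support, d i = 1 := h
  have hpos : d.support.Nonempty := by
    by_contra hc
    rw [Finset.not_nonempty_iff_eq_empty] at hc
    rw [hc, Finset.sum_empty] at hsum
    exact one_ne_zero hsum.symm
  have hle : d.support.card ≤ 1 := by
    have h2 := Finset.card_nsmul_le_sum d.support (fun i => d i) 1
      (fun x hx => Nat.one_le_iff_ne_zero.mpr (Finsupp.mem_support_iff.mp hx))
    rw [smul_eq_mul, mul_one] at h2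
    exact le_trans h2 (le_of_eq hsum)
  have hcard : d.support.card = 1 := le_antisymm hle (Finset.card_pos.mpr hpos)
  obtain ⟨s, hs⟩ := Finset.card_eq_one.mp hcard
  have hd := (Finsupp.support_eq_singleton.mp hs).2
  have hda : d s = 1 := by
    rw [hs, Finset.sum_singleton] at hsum
    exact hsum
  exact ⟨s, by rw [hd, hda]⟩

lemma G_term_zero (idx : Fin (k+3) → Fin (b+1)) (G : MvPolynomial (Fin b) ℂ)
    (hG : G.IsHomogeneous (k+4)) :
    eval (Pi.single (0:Fin (b+1)) (1:ℂ)) (derivs (List.ofFn idx) (rename Fin.succ G)) = 0 := by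
  conv_lhs => rw [as_sum G]
  rw [map_sum, derivs_sum, map_sum]
  apply Finset.sum_eq_zero
  intro d0 hd0
  rw [rename_monomial]
  apply valG
  · exact Finsupp.mapDomain_notin_range _ _ (by rintro ⟨j, hj⟩; exact Fin.succ_ne_zero j hj)
  · have hdeg : d0.degree = k+4 := by
      by_contra hc
      exact (mem_support_iff.mp hd0) (hG.coeff_eq_zero hc)
    rw [← degree_eq_sum, degree_mapDomain', hdeg]

lemma rename_L (L : MvPolynomial (Fin b) ℂ) (hL : L.IsHomogeneous 1) :
    rename (Fin.succ) L = ∑ j : Fin b, monomial (Finsupp.single (Fin.succ j) 1)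
      (MvPolynomial.coeff (Finsupp.single j 1) L) := by
  conv_lhs => rw [as_sum L]
  rw [map_sum]
  have hsub : L.support ⊆ Finset.univ.image (fun j : Fin b => Finsupp.single j (1:ℕ)) := by
    intro d hd
    have hdeg : d.degree = 1 := by
      by_contra hc
      exact (mem_support_iff.mp hd) (hL.coeff_eq_zero hc)
    obtain ⟨j, rfl⟩ := single_of_degree_one d hdeg
    exact Finset.mem_image.mpr ⟨j, Finset.mem_univ _, rfl⟩
  rw [Finset.sum_subset hsub (fun d _ hd => by
    rw [MvPolynomial.notMem_support_iff.mp hd, monomial_zero, map_zero])]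
  rw [Finset.sum_image (fun x _ y _ h => Finsupp.single_left_injective one_ne_zero h)]
  apply Finset.sum_congr rfl
  intro j _
  rw [rename_monomial, Finsupp.mapDomain_single]

lemma onefac (f c x : ℂ) (hf : f ≠ 0) : 1 / f * c * f * x = c * x := by
  field_simp

theorem main_aux (b k q : ℕ) (hqb : q ≤ b) (a : ℂ)
    (L : MvPolynomial (Fin b) ℂ) (hL : L.IsHomogeneous 1)
    (G : MvPolynomial (Fin b) ℂ) (hG : G.IsHomogeneous (k+4)) :
    2 * q ≤ tensorRank (HF (k+3)
      (C (a / (Nat.factorial (k+4) : ℂ)) * X 0 ^ (k+4)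
        + C (1 / (Nat.factorial (k+3) : ℂ)) * X 0 ^ (k+3) * rename Fin.succ L
        + C (1 / (2 * (Nat.factorial (k+2) : ℂ))) * X 0 ^ (k+2)
            * (∑ i : Fin q, X ((Fin.castLE hqb i).succ) ^ 2)
        + rename Fin.succ G)
      (Pi.single (0 : Fin (b + 1)) 1)) := by
  classical
  have hf4 : ((Nat.factorial (k+4) : ℕ) : ℂ) ≠ 0 := Nat.cast_ne_zero.mpr (Nat.factorial_ne_zero _)
  have hf3 : ((Nat.factorial (k+3) : ℕ) : ℂ) ≠ 0 := Nat.cast_ne_zero.mpr (Nat.factorial_ne_zero _)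
  have hf2 : (2 * (Nat.factorial (k+2) : ℂ)) ≠ 0 :=
    mul_ne_zero two_ne_zero (Nat.cast_ne_zero.mpr (Nat.factorial_ne_zero _))
  have hHF : HF (k+3)
      (C (a / (Nat.factorial (k+4) : ℂ)) * X 0 ^ (k+4)
        + C (1 / (Nat.factorial (k+3) : ℂ)) * X 0 ^ (k+3) * rename Fin.succ L
        + C (1 / (2 * (Nat.factorial (k+2) : ℂ))) * X 0 ^ (k+2)
            * (∑ i : Fin q, X ((Fin.castLE hqb i).succ) ^ 2)
        + rename Fin.succ G)
      (Pi.single (0 : Fin (b + 1)) 1)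
      = Wt k b (cL b L) (eQ b q)
          (fun x y => (if x = 0 ∧ y = 0 then a else 0)
            + ((if y = 0 then cL b L x else 0) + (if x = 0 then cL b L y else 0))
            + (if x = y then eQ b q x else 0)) := by
    funext idx
    show eval (Pi.single (0:Fin (b+1)) (1:ℂ)) (derivs (List.ofFn idx) _) = _
    rw [derivs_add, derivs_add, derivs_add, map_add, map_add, map_add]
    have hA : eval (Pi.single (0:Fin (b+1)) (1:ℂ)) (derivs (List.ofFn idx)
        (C (a / (Nat.factorial (k+4) : ℂ)) * X 0 ^ (k+4)))
        = (if ∀ p, idx p = 0 then a else 0) := by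
      rw [C_mul_X_pow_eq_monomial, valA, div_mul_cancel₀ a hf4]
      rw [mul_ite, mul_one, mul_zero]
    have hB : eval (Pi.single (0:Fin (b+1)) (1:ℂ)) (derivs (List.ofFn idx)
        (C (1 / (Nat.factorial (k+3) : ℂ)) * X 0 ^ (k+3) * rename Fin.succ L))
        = ∑ v : Fin (b+1), cL b L v * (if Ind1 v idx then 1 else 0) := by
      rw [rename_L L hL, Finset.mul_sum, derivs_sum, map_sum]
      rw [Fin.sum_univ_succ (f := fun v => cL b L v * (if Ind1 v idx then (1:ℂ) else 0))]
      rw [cL_zero, zero_mul, zero_add]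
      apply Finset.sum_congr rfl
      intro j _
      rw [C_mul_X_pow_eq_monomial, monomial_mul, valB _ _ (Fin.succ_ne_zero j)]
      rw [onefac _ _ _ hf3, cL_succ]
    have hC : eval (Pi.single (0:Fin (b+1)) (1:ℂ)) (derivs (List.ofFn idx)
        (C (1 / (2 * (Nat.factorial (k+2) : ℂ))) * X 0 ^ (k+2)
          * (∑ i : Fin q, X ((Fin.castLE hqb i).succ) ^ 2)))
        = ∑ v : Fin (b+1), eQ b q v * (if Ind2 v idx then 1 else 0) := by
      rw [Finset.mul_sum, derivs_sum, map_sum]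
      have hterm : ∀ i : Fin q,
          eval (Pi.single (0:Fin (b+1)) (1:ℂ)) (derivs (List.ofFn idx)
            (C (1 / (2 * (Nat.factorial (k+2) : ℂ))) * X 0 ^ (k+2)
              * X ((Fin.castLE hqb i).succ) ^ 2))
          = (if Ind2 ((Fin.castLE hqb i).succ) idx then (1:ℂ) else 0) := by
        intro i
        rw [C_mul_X_pow_eq_monomial, X_pow_eq_monomial, monomial_mul,
          valC _ _ (Fin.succ_ne_zero _)]
        rw [mul_one, one_div_mul_cancel hf2, one_mul]
      rw [Finset.sum_congr rfl (fun i _ => hterm i)]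
      have himg : Finset.univ.image (fun i : Fin q => (Fin.castLE hqb i).succ)
          = Finset.univ.filter (fun v : Fin (b+1) => 1 ≤ (v:ℕ) ∧ (v:ℕ) ≤ q) := by
        ext v
        rw [Finset.mem_image, Finset.mem_filter]
        constructor
        · rintro ⟨i, -, rfl⟩
          refine ⟨Finset.mem_univ _, ?_, ?_⟩
          · simp
          · simp only [Fin.val_succ, Fin.coe_castLE]
            omega
        · rintro ⟨-, h1, h2⟩
          refine ⟨⟨(v:ℕ) - 1, by omega⟩, Finset.mem_univ _, ?_⟩
          apply Fin.ext
          simp only [Fin.val_succ, Fin.coe_castLE]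
          omega
      have hrhs : ∑ v : Fin (b+1), eQ b q v * (if Ind2 v idx then (1:ℂ) else 0)
          = ∑ v ∈ Finset.univ.filter (fun v : Fin (b+1) => 1 ≤ (v:ℕ) ∧ (v:ℕ) ≤ q),
              (if Ind2 v idx then (1:ℂ) else 0) := by
        rw [Finset.sum_filter]
        apply Finset.sum_congr rfl
        intro v _
        rw [eQ]
        by_cases hP : 1 ≤ (v:ℕ) ∧ (v:ℕ) ≤ q
        · rw [if_pos hP, if_pos hP, one_mul]
        · rw [if_neg hP, if_neg hP, zero_mul]
      rw [hrhs, ← himg]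
      rw [Finset.sum_image (fun x _ y _ h => by
        have : ((Fin.castLE hqb x).succ : Fin (b+1)).val = ((Fin.castLE hqb y).succ).val :=
          congrArg Fin.val h
        simp only [Fin.val_succ, Fin.coe_castLE] at this
        exact Fin.ext (by omega))]
    have hGz : eval (Pi.single (0:Fin (b+1)) (1:ℂ)) (derivs (List.ofFn idx)
        (rename Fin.succ G)) = 0 := G_term_zero idx G hG
    rw [hA, hB, hC, hGz, add_zero, add_assoc]
    exact canonical_eq_Wt a (cL b L) (eQ b q) (cL_zero L) (eQ_zero q) idx
  rw [hHF]
  apply rank_Wt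
  have himg : Finset.univ.filter (fun v : Fin (b+1) => v ≠ 0 ∧ eQ b q v ≠ 0)
      = Finset.univ.image (fun i : Fin q => (Fin.castLE hqb i).succ) := by
    ext v
    rw [Finset.mem_filter, Finset.mem_image]
    constructor
    · rintro ⟨-, hv0, hv⟩
      rw [eQ] at hv
      by_cases hP : 1 ≤ (v:ℕ) ∧ (v:ℕ) ≤ q
      · refine ⟨⟨(v:ℕ) - 1, by omega⟩, Finset.mem_univ _, ?_⟩
        apply Fin.ext
        simp only [Fin.val_succ, Fin.coe_castLE]
        omega
      · rw [if_neg hP] at hv; exact absurd rfl hv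
    · rintro ⟨i, -, rfl⟩
      refine ⟨Finset.mem_univ _, Fin.succ_ne_zero _, ?_⟩
      rw [eQ]
      rw [if_pos ⟨by simp, by simp only [Fin.val_succ, Fin.coe_castLE]; omega⟩]
      exact one_ne_zero
  rw [himg]
  rw [Finset.card_image_of_injective _ (fun x y h => by
    have : ((Fin.castLE hqb x).succ : Fin (b+1)).val = ((Fin.castLE hqb y).succ).val :=
      congrArg Fin.val h
    simp only [Fin.val_succ, Fin.coe_castLE] at this
    exact Fin.ext (by omega))]
  rw [Finset.card_univ, Fintype.card_fin]


/-- Let `n ≥ 4`, `a ∈ ℂ`, `L` a linear form in `x_1, …, x_b`, `1 ≤ q ≤ b`, and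
`F = (a/n!)·x_0^n + (1/(n-1)!)·x_0^{n-1}·L + (1/(2(n-2)!))·x_0^{n-2}·(x_1^2 + ⋯ + x_q^2)
+ G(x_1, …, x_b)` with `G` a form of degree `n` not involving `x_0`.
Then `rk 𝓗_F(e_0) ≥ 2q`. -/
theorem stmt_10 (b n q : ℕ) (hn : 4 ≤ n) (hq1 : 1 ≤ q) (hqb : q ≤ b) (a : ℂ)
    (L : MvPolynomial (Fin b) ℂ) (hL : L.IsHomogeneous 1)
    (G : MvPolynomial (Fin b) ℂ) (hG : G.IsHomogeneous n) :
    2 * q ≤ tensorRank (HF (n - 1)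
      (C (a / (Nat.factorial n : ℂ)) * X 0 ^ n
        + C (1 / (Nat.factorial (n - 1) : ℂ)) * X 0 ^ (n - 1) * rename Fin.succ L
        + C (1 / (2 * (Nat.factorial (n - 2) : ℂ))) * X 0 ^ (n - 2)
            * (∑ i : Fin q, X ((Fin.castLE hqb i).succ) ^ 2)
        + rename Fin.succ G)
      (Pi.single (0 : Fin (b + 1)) 1)) := by
  obtain ⟨k, rfl⟩ : ∃ k, n = k + 4 := ⟨n - 4, by omega⟩
  exact main_aux b k q hqb a L hL G hG

end Final
end

section
/- Let n ≥ 3 and let F = x_0^n + G(x_1,…,x_b) ∈ ℂ[x_0,…,x_b], where G is a form of degree n not involving x_0 which is honest as a form in the b variables x_1,…,x_b. Then the cardinality of the set of points [v] ∈ ℙ^b with F(v) ≠ 0 and rk 𝓗_F(v) = 1 equals 1 plus the cardinality of the set of points [w] ∈ ℙ^{b-1} with G(w) ≠ 0 and rk 𝓗_G(w) = 1. -/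
open MvPolynomial

/-! ### Auxiliary lemmas on iterated partial derivatives -/

/-- Iterated partial derivative along a list of variable indices. -/
noncomputable def Dl {σ : Type*} [DecidableEq σ] (L : List σ) (P : MvPolynomial σ ℂ) :
    MvPolynomial σ ℂ := L.foldl (fun p i => pderiv i p) P

lemma Dl_nil {σ : Type*} [DecidableEq σ] (P : MvPolynomial σ ℂ) : Dl [] P = P := rfl

lemma Dl_cons {σ : Type*} [DecidableEq σ] (a : σ) (L : List σ) (P : MvPolynomial σ ℂ) :
    Dl (a :: L) P = Dl L (pderiv a P) := rfl

lemma Dl_zero {σ : Type*} [DecidableEq σ] (L : List σ) : Dl L (0 : MvPolynomial σ ℂ) = 0 := by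
  induction L with
  | nil => rfl
  | cons a L ih => rw [Dl_cons, map_zero, ih]

lemma Dl_add {σ : Type*} [DecidableEq σ] (L : List σ) (P Q : MvPolynomial σ ℂ) :
    Dl L (P + Q) = Dl L P + Dl L Q := by
  induction L generalizing P Q with
  | nil => rfl
  | cons a L ih => rw [Dl_cons, map_add, ih]; rfl

lemma Dl_rename {b : ℕ} (L : List (Fin b)) (P : MvPolynomial (Fin b) ℂ) :
    Dl (L.map Fin.succ) (rename Fin.succ P) = rename Fin.succ (Dl L P) := by
  induction L generalizing P with
  | nil => rfl
  | cons a L ih =>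
    rw [List.map_cons, Dl_cons, Dl_cons, pderiv_rename (Fin.succ_injective b), ih]

lemma pderiv_zero_rename {b : ℕ} (P : MvPolynomial (Fin b) ℂ) :
    pderiv (0 : Fin (b + 1)) (rename Fin.succ P) = 0 := by
  induction P using MvPolynomial.induction_on with
  | C a => simp
  | add p q hp hq => simp [hp, hq]
  | mul_X p j hp =>
    rw [map_mul, rename_X, pderiv_mul, hp, pderiv_X, Pi.single_eq_of_ne (Fin.succ_ne_zero j)]
    simp

lemma Dl_rename_zero_mem {b : ℕ} (L : List (Fin (b + 1))) (P : MvPolynomial (Fin b) ℂ)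
    (hL : (0 : Fin (b + 1)) ∈ L) : Dl L (rename Fin.succ P) = 0 := by
  induction L generalizing P with
  | nil => simp at hL
  | cons a L ih =>
    rcases eq_or_ne a 0 with rfl | ha
    · rw [Dl_cons, pderiv_zero_rename, Dl_zero]
    · obtain ⟨j, rfl⟩ : ∃ j, a = Fin.succ j := ⟨a.pred ha, (Fin.succ_pred a ha).symm⟩
      rw [Dl_cons, pderiv_rename (Fin.succ_injective b)]
      rcases List.mem_cons.mp hL with h | h
      · exact absurd h.symm (Fin.succ_ne_zero j)
      · exact ih _ h

lemma pderiv_C_mul_X_pow {b : ℕ} (c : ℂ) (m : ℕ) (i : Fin (b + 1)) :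
    pderiv i (C c * X 0 ^ m) = if i = 0 then C (c * m) * X 0 ^ (m - 1) else 0 := by
  rw [pderiv_C_mul, pderiv_pow, pderiv_X]
  split_ifs with h
  · subst h; simp [Pi.single_eq_same]; ring
  · rw [Pi.single_eq_of_ne (Ne.symm h)]; simp

lemma Dl_X_pow_ne {b : ℕ} (L : List (Fin (b + 1))) (c : ℂ) (m : ℕ) (hL : ∃ j ∈ L, j ≠ 0) :
    Dl L (C c * X 0 ^ m) = 0 := by
  induction L generalizing c m with
  | nil => simp at hL
  | cons a L ih =>
    rw [Dl_cons, pderiv_C_mul_X_pow]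
    rcases eq_or_ne a 0 with rfl | ha
    · rw [if_pos rfl]
      obtain ⟨j, hj, hj0⟩ := hL
      rcases List.mem_cons.mp hj with h | h
      · exact absurd h hj0
      · exact ih _ _ ⟨j, h, hj0⟩
    · rw [if_neg ha, Dl_zero]

lemma Dl_X_pow_replicate {b : ℕ} (k : ℕ) (c : ℂ) (m : ℕ) :
    Dl (List.replicate k (0 : Fin (b + 1))) (C c * X 0 ^ m) =
      C (c * m.descFactorial k) * X 0 ^ (m - k) := by
  induction k generalizing c m with
  | zero => rw [List.replicate_zero, Dl_nil]; simp
  | succ k ih =>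
    rw [List.replicate_succ, Dl_cons, pderiv_C_mul_X_pow, if_pos rfl, ih]
    have h2 : m - 1 - k = m - (k + 1) := by omega
    rw [h2]
    congr 2
    cases m with
    | zero => simp
    | succ m => rw [Nat.succ_descFactorial_succ]; push_cast; ring

/-! ### Homogeneity lemmas -/

lemma pderiv_isHomogeneous {σ : Type*} [DecidableEq σ] {p : MvPolynomial σ ℂ} {m : ℕ}
    (hp : p.IsHomogeneous m) (i : σ) : (pderiv i p).IsHomogeneous (m - 1) := by
  rw [p.as_sum, map_sum]
  apply IsHomogeneous.sum
  intro d hd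
  rw [pderiv_monomial]
  rcases eq_or_ne (d i) 0 with h0 | h0
  · rw [h0]; simp only [Nat.cast_zero, mul_zero, map_zero]
    exact isHomogeneous_zero _ _ _
  · apply isHomogeneous_monomial
    have hdm : d.degree = m := by
      rw [Finsupp.degree_eq_weight_one]; exact hp (Finsupp.mem_support_iff.mp hd)
    have hsub : d = (d - Finsupp.single i 1) + Finsupp.single i 1 := by
      ext j
      rcases eq_or_ne j i with rfl | hj
      · simp [Finsupp.single_eq_same]; omega
      · simp [Finsupp.single_eq_of_ne' (Ne.symm hj)]
    have := congrArg Finsupp.degree hsub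
    rw [Finsupp.degree_eq_weight_one] at hdm this ⊢
    rw [map_add] at this
    have h1 : (Finsupp.weight (fun _ : σ => (1 : ℕ))) (Finsupp.single i 1) = 1 := by
      rw [Finsupp.weight_apply, Finsupp.sum_single_index] <;> simp
    omega

lemma eval_zero_of_isHomogeneous {σ : Type*} {p : MvPolynomial σ ℂ} {m : ℕ}
    (hp : p.IsHomogeneous m) (hm : m ≠ 0) : eval (0 : σ → ℂ) p = 0 := by
  have : constantCoeff p = 0 := by
    rw [constantCoeff_eq]
    exact hp.coeff_eq_zero (by simpa [map_zero] using Ne.symm hm)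
  simpa [eval_zero] using this

lemma HF_eq {σ : Type*} [DecidableEq σ] (k : ℕ) (F : MvPolynomial σ ℂ) (v : σ → ℂ)
    (idx : Fin k → σ) : HF k F v idx = eval v (Dl (List.ofFn idx) F) := rfl

lemma Dl_isHomogeneous {σ : Type*} [DecidableEq σ] {p : MvPolynomial σ ℂ} {m : ℕ}
    (hp : p.IsHomogeneous m) (L : List σ) : (Dl L p).IsHomogeneous (m - L.length) := by
  induction L generalizing p m with
  | nil => simpa [Dl_nil] using hp
  | cons a L ih =>
    have := ih (pderiv_isHomogeneous hp a)
    have he : m - 1 - L.length = m - (a :: L).length := by simp; omega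
    rw [he] at this
    exact this

/-! ### Block structure of the Hessian tensor of `F = X 0 ^ n + rename Fin.succ G` -/

lemma HF_G_zero {b n : ℕ} (G : MvPolynomial (Fin b) ℂ) (hn : 3 ≤ n)
    (hG : G.IsHomogeneous n) : HF (n - 1) G 0 = 0 := by
  funext idx
  rw [HF_eq]
  have h := Dl_isHomogeneous hG (List.ofFn idx)
  rw [List.length_ofFn] at h
  exact eval_zero_of_isHomogeneous h (by omega)

lemma HF_F_all0 {b n : ℕ} (G : MvPolynomial (Fin b) ℂ) (v : Fin (b + 1) → ℂ) (hn : 3 ≤ n) :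
    HF (n - 1) (X 0 ^ n + rename Fin.succ G) v (fun _ => 0) =
      (n.descFactorial (n - 1) : ℂ) * v 0 := by
  rw [HF_eq, Dl_add, List.ofFn_const]
  rw [Dl_rename_zero_mem _ _ (by
    rw [List.mem_replicate]; exact ⟨by omega, rfl⟩)]
  have : (X 0 ^ n : MvPolynomial (Fin (b + 1)) ℂ) = C 1 * X 0 ^ n := by rw [map_one, one_mul]
  rw [this, Dl_X_pow_replicate]
  have h1 : n - (n - 1) = 1 := by omega
  rw [h1]
  simp [mul_comm]

lemma HF_F_mixed {b n : ℕ} (G : MvPolynomial (Fin b) ℂ) (v : Fin (b + 1) → ℂ)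
    (idx : Fin (n - 1) → Fin (b + 1)) (h0 : ∃ i, idx i = 0) (h1 : ∃ i, idx i ≠ 0) :
    HF (n - 1) (X 0 ^ n + rename Fin.succ G) v idx = 0 := by
  rw [HF_eq, Dl_add]
  obtain ⟨i0, hi0⟩ := h0
  obtain ⟨i1, hi1⟩ := h1
  have : (X 0 ^ n : MvPolynomial (Fin (b + 1)) ℂ) = C 1 * X 0 ^ n := by rw [map_one, one_mul]
  rw [this, Dl_X_pow_ne _ _ _ ⟨idx i1, List.mem_ofFn.mpr ⟨i1, rfl⟩, hi1⟩,
    Dl_rename_zero_mem _ _ (by rw [← hi0]; exact List.mem_ofFn.mpr ⟨i0, rfl⟩)]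
  simp

lemma HF_F_succ {b n : ℕ} (G : MvPolynomial (Fin b) ℂ) (v : Fin (b + 1) → ℂ)
    (idx' : Fin (n - 1) → Fin b) (hn : 3 ≤ n) :
    HF (n - 1) (X 0 ^ n + rename Fin.succ G) v (Fin.succ ∘ idx') =
      HF (n - 1) G (v ∘ Fin.succ) idx' := by
  rw [HF_eq, Dl_add]
  have hmem : ∃ j ∈ List.ofFn (Fin.succ ∘ idx'), j ≠ 0 := by
    refine ⟨Fin.succ (idx' ⟨0, by omega⟩), List.mem_ofFn.mpr ⟨⟨0, by omega⟩, rfl⟩,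
      Fin.succ_ne_zero _⟩
  have : (X 0 ^ n : MvPolynomial (Fin (b + 1)) ℂ) = C 1 * X 0 ^ n := by rw [map_one, one_mul]
  rw [this, Dl_X_pow_ne _ _ _ hmem]
  have hofn : List.ofFn (Fin.succ ∘ idx') = (List.ofFn idx').map Fin.succ := by
    rw [List.map_ofFn]
  rw [hofn, Dl_rename, zero_add, eval_rename, HF_eq]

/-! ### Rank-one lemmas -/

lemma tensorRank_eq_one_iff {k m : ℕ} (T : (Fin k → Fin m) → ℂ) :
    tensorRank T = 1 ↔ IsRankOne T := by
  constructor
  · intro h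
    have hne : {r | ∃ f : Fin r → ((Fin k → Fin m) → ℂ),
        (∀ s, IsRankOne (f s)) ∧ T = ∑ s, f s}.Nonempty := by
      by_contra hc
      rw [Set.not_nonempty_iff_eq_empty] at hc
      rw [tensorRank, hc, Nat.sInf_empty] at h
      exact one_ne_zero h.symm
    have := Nat.sInf_mem hne
    rw [← tensorRank, h] at this
    obtain ⟨f, hf, hT⟩ := this
    rw [hT, Fin.sum_univ_one]
    exact hf 0
  · intro h
    have h1 : (1 : ℕ) ∈ {r | ∃ f : Fin r → ((Fin k → Fin m) → ℂ),
        (∀ s, IsRankOne (f s)) ∧ T = ∑ s, f s} :=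
      ⟨fun _ => T, fun _ => h, by rw [Fin.sum_univ_one]⟩
    have hle : tensorRank T ≤ 1 := Nat.sInf_le h1
    have hne0 : tensorRank T ≠ 0 := by
      intro h0
      have := Nat.sInf_mem ⟨1, h1⟩
      rw [← tensorRank, h0] at this
      obtain ⟨f, _, hT⟩ := this
      rw [Finset.univ_eq_empty, Finset.sum_empty] at hT
      exact h.1 hT
    omega

lemma isRankOne_delta {k b : ℕ} (hk : k ≠ 0) {T : (Fin k → Fin (b + 1)) → ℂ} {a : ℂ}
    (ha : a ≠ 0) (hT : ∀ idx, T idx = if ∀ i, idx i = 0 then a else 0) : IsRankOne T := by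
  constructor
  · intro h
    have := congrFun h (fun _ => 0)
    rw [hT] at this
    simp at this
    exact ha this
  · refine ⟨fun i j => if j = 0 then (if (i : ℕ) = 0 then a else 1) else 0, fun j => ?_⟩
    rw [hT]
    split_ifs with h
    · have : ∀ i : Fin k, (if j i = 0 then (if (i : ℕ) = 0 then a else 1) else 0)
          = (if (i : ℕ) = 0 then a else 1) := fun i => by rw [h i, if_pos rfl]
      rw [Finset.prod_congr rfl (fun i _ => this i),
        Finset.prod_eq_single (⟨0, Nat.pos_of_ne_zero hk⟩ : Fin k)
          (fun i _ hi => by rw [if_neg (by simpa [Fin.ext_iff] using hi)])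
          (fun h => absurd (Finset.mem_univ _) h), if_pos rfl]
    · push_neg at h
      obtain ⟨i, hi⟩ := h
      exact (Finset.prod_eq_zero (Finset.mem_univ i)
        (by simp only []; rw [if_neg hi])).symm

lemma isRankOne_embed_iff {k b : ℕ} {T : (Fin k → Fin (b + 1)) → ℂ}
    {B : (Fin k → Fin b) → ℂ} (hsucc : ∀ idx', T (Fin.succ ∘ idx') = B idx')
    (hzero : ∀ idx, (∃ i, idx i = 0) → T idx = 0) : IsRankOne T ↔ IsRankOne B := by
  constructor
  · rintro ⟨hTne, u, hu⟩
    refine ⟨?_, fun i j => u i (Fin.succ j), fun j => ?_⟩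
    · intro hB0
      apply hTne
      funext idx
      by_cases h : ∃ i, idx i = 0
      · rw [hzero idx h]; rfl
      · push_neg at h
        have : idx = Fin.succ ∘ (fun i => (idx i).pred (h i)) := by
          funext i; simp [Fin.succ_pred]
        rw [this, hsucc, hB0]; rfl
    · rw [← hsucc j, hu]; rfl
  · rintro ⟨hBne, u, hu⟩
    constructor
    · intro hT0
      apply hBne
      funext j
      rw [← hsucc j, hT0]; rfl
    · refine ⟨fun i => Fin.cases 0 (u i), fun j => ?_⟩
      by_cases h : ∃ i, j i = 0
      · rw [hzero j h]
        obtain ⟨i, hi⟩ := h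
        refine (Finset.prod_eq_zero (Finset.mem_univ i) ?_).symm
        rw [hi]; rfl
      · push_neg at h
        have hj : j = Fin.succ ∘ (fun i => (j i).pred (h i)) := by
          funext i; simp [Fin.succ_pred]
        rw [hj, hsucc, hu]
        apply Finset.prod_congr rfl
        intro i _
        show u i ((j i).pred _) = Fin.cases 0 (u i) ((j i).pred _).succ
        rw [Fin.cases_succ]

lemma rankOne_zero_of_blocks {k b : ℕ} (hk : 2 ≤ k) {T : (Fin k → Fin (b + 1)) → ℂ}
    (hmix : ∀ idx, (∃ i, idx i = 0) → (∃ i, idx i ≠ 0) → T idx = 0)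
    (h1 : IsRankOne T) (idx1 : Fin k → Fin (b + 1)) (hidx1 : ∀ i, idx1 i ≠ 0)
    (hT1 : T idx1 ≠ 0) : T (fun _ => 0) = 0 := by
  by_contra h0
  obtain ⟨-, u, hu⟩ := h1
  have hu0 : ∀ i, u i 0 ≠ 0 := by
    intro i hi
    apply h0
    rw [hu]
    exact Finset.prod_eq_zero (Finset.mem_univ i) hi
  have hu1 : ∀ i, u i (idx1 i) ≠ 0 := by
    intro i hi
    apply hT1
    rw [hu]
    exact Finset.prod_eq_zero (Finset.mem_univ i) hi
  set i0 : Fin k := ⟨0, by omega⟩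
  set idx2 := Function.update idx1 i0 0 with hidx2
  have hmixed : T idx2 = 0 := by
    apply hmix
    · exact ⟨i0, by rw [hidx2, Function.update_self]⟩
    · refine ⟨⟨1, by omega⟩, ?_⟩
      rw [hidx2, Function.update_of_ne (by simp [i0, Fin.ext_iff])]
      exact hidx1 _
  apply absurd hmixed
  rw [hu]
  apply Finset.prod_ne_zero_iff.mpr
  intro i _
  rcases eq_or_ne i i0 with h | h
  · rw [hidx2, h, Function.update_self]; exact hu0 i0
  · rw [hidx2, Function.update_of_ne h]; exact hu1 i

/-! ### The linear embedding `w ↦ (0, w)` -/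

noncomputable def consZero (b : ℕ) : (Fin b → ℂ) →ₗ[ℂ] (Fin (b + 1) → ℂ) where
  toFun w := Fin.cons 0 w
  map_add' w w' := by
    funext i
    refine Fin.cases ?_ (fun j => ?_) i <;> simp
  map_smul' c w := by
    funext i
    refine Fin.cases ?_ (fun j => ?_) i <;> simp

lemma consZero_injective (b : ℕ) : Function.Injective (consZero b) := by
  intro w w' h
  funext j
  have := congrFun h (Fin.succ j)
  simpa [consZero] using this

/-- Let `n ≥ 3` and `F = x_0^n + G(x_1, …, x_b)` with `G` a form of degree `n`
not involving `x_0`, honest as a form in the `b` variables `x_1, …, x_b`. Then the number of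
points `[v] ∈ ℙ^b` with `F(v) ≠ 0` and `rk 𝓗_F(v) = 1` equals `1` plus the number of points
`[w] ∈ ℙ^{b-1}` with `G(w) ≠ 0` and `rk 𝓗_G(w) = 1`. -/
theorem stmt_12 (b n : ℕ) (hn : 3 ≤ n)
    (G : MvPolynomial (Fin b) ℂ) (hG : G.IsHomogeneous n)
    (hGhonest : ∀ w : Fin b → ℂ, w ≠ 0 → HF (n - 1) G w ≠ 0) :
    {p : Projectivization ℂ (Fin (b + 1) → ℂ) |
        ∃ (v : Fin (b + 1) → ℂ) (hv : v ≠ 0), Projectivization.mk ℂ v hv = p ∧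
          eval v (X 0 ^ n + rename Fin.succ G) ≠ 0 ∧
          tensorRank (HF (n - 1) (X 0 ^ n + rename Fin.succ G) v) = 1}.encard =
      1 + {p : Projectivization ℂ (Fin b → ℂ) |
        ∃ (w : Fin b → ℂ) (hw : w ≠ 0), Projectivization.mk ℂ w hw = p ∧
          eval w G ≠ 0 ∧ tensorRank (HF (n - 1) G w) = 1}.encard := by
  classical
  set F : MvPolynomial (Fin (b + 1)) ℂ := X 0 ^ n + rename Fin.succ G with hF
  set d : ℂ := (n.descFactorial (n - 1) : ℂ) with hdd
  have hd : d ≠ 0 := by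
    rw [hdd]
    rw [Nat.cast_ne_zero]
    rw [Ne, Nat.descFactorial_eq_zero_iff_lt]
    omega
  have hk2 : 2 ≤ n - 1 := by omega
  have hkne : n - 1 ≠ 0 := by omega
  have hmix : ∀ (v : Fin (b + 1) → ℂ) idx, (∃ i, idx i = 0) → (∃ i, idx i ≠ 0) →
      HF (n - 1) F v idx = 0 := fun v => HF_F_mixed G v
  have hall0 : ∀ v : Fin (b + 1) → ℂ, HF (n - 1) F v (fun _ => 0) = d * v 0 :=
    fun v => HF_F_all0 G v hn
  have hsucc : ∀ (v : Fin (b + 1) → ℂ) idx', HF (n - 1) F v (Fin.succ ∘ idx') =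
      HF (n - 1) G (v ∘ Fin.succ) idx' := fun v idx' => HF_F_succ G v idx' hn
  have key0 : ∀ v : Fin (b + 1) → ℂ, v ∘ Fin.succ = 0 → ∀ idx,
      HF (n - 1) F v idx = if ∀ i, idx i = 0 then d * v 0 else 0 := by
    intro v hv0 idx
    by_cases hall : ∀ i, idx i = 0
    · rw [if_pos hall]
      have h : idx = fun _ => 0 := funext hall
      rw [h, hall0]
    · rw [if_neg hall]
      push_neg at hall
      obtain ⟨i, hi⟩ := hall
      by_cases hex : ∃ i, idx i = 0
      · exact hmix v idx hex ⟨i, hi⟩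
      · push_neg at hex
        have h : idx = Fin.succ ∘ fun i => (idx i).pred (hex i) := by
          funext i; simp [Fin.succ_pred]
        rw [h, hsucc, hv0, HF_G_zero G hn hG]
        rfl
  have hzero_of_v0 : ∀ v : Fin (b + 1) → ℂ, v 0 = 0 → ∀ idx, (∃ i, idx i = 0) →
      HF (n - 1) F v idx = 0 := by
    intro v hv0 idx hex
    by_cases hall : ∀ i, idx i = 0
    · have h : idx = fun _ => 0 := funext hall
      rw [h, hall0, hv0, mul_zero]
    · push_neg at hall
      exact hmix v idx hex hall
  have hevalF : ∀ v : Fin (b + 1) → ℂ, eval v F = v 0 ^ n + eval (v ∘ Fin.succ) G := by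
    intro v
    rw [hF]
    simp [eval_rename]
  set φ : Projectivization ℂ (Fin b → ℂ) → Projectivization ℂ (Fin (b + 1) → ℂ) :=
    Projectivization.map (consZero b) (consZero_injective b) with hφ
  set e0 : Fin (b + 1) → ℂ := Fin.cons 1 0 with he0def
  have he00 : e0 0 = 1 := rfl
  have he0 : e0 ≠ 0 := fun h => one_ne_zero (he00 ▸ congrFun h 0)
  have hcz : ∀ w : Fin b → ℂ, (consZero b) w = Fin.cons 0 w := fun _ => rfl
  set SG := {p : Projectivization ℂ (Fin b → ℂ) |
      ∃ (w : Fin b → ℂ) (hw : w ≠ 0), Projectivization.mk ℂ w hw = p ∧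
        eval w G ≠ 0 ∧ tensorRank (HF (n - 1) G w) = 1} with hSG
  have hset : {p : Projectivization ℂ (Fin (b + 1) → ℂ) |
      ∃ (v : Fin (b + 1) → ℂ) (hv : v ≠ 0), Projectivization.mk ℂ v hv = p ∧
        eval v F ≠ 0 ∧ tensorRank (HF (n - 1) F v) = 1} =
      insert (Projectivization.mk ℂ e0 he0) (φ '' SG) := by
    ext p
    simp only [Set.mem_setOf_eq, Set.mem_insert_iff]
    constructor
    · rintro ⟨v, hv, rfl, hFv, hrk⟩
      have hr1 : IsRankOne (HF (n - 1) F v) := (tensorRank_eq_one_iff _).mp hrk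
      by_cases hw : v ∘ Fin.succ = 0
      · left
        have hv0 : v 0 ≠ 0 := by
          intro h0
          apply hr1.1
          funext idx
          rw [key0 v hw idx, h0, mul_zero]
          simp
        rw [Projectivization.mk_eq_mk_iff']
        refine ⟨v 0, funext fun i => ?_⟩
        refine Fin.cases ?_ (fun j => ?_) i
        · simp [he0def]
        · have := congrFun hw j
          simp only [Function.comp_apply] at this
          simp [he0def, this]
      · right
        obtain ⟨idx', hidx'⟩ := Function.ne_iff.mp (hGhonest _ hw)
        have hT1 : HF (n - 1) F v (Fin.succ ∘ idx') ≠ 0 := by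
          rw [hsucc]; exact hidx'
        have hv00 : v 0 = 0 := by
          have h := rankOne_zero_of_blocks hk2 (hmix v) hr1 (Fin.succ ∘ idx')
            (fun i => Fin.succ_ne_zero _) hT1
          rw [hall0] at h
          exact (mul_eq_zero.mp h).resolve_left hd
        have hr1B : IsRankOne (HF (n - 1) G (v ∘ Fin.succ)) :=
          (isRankOne_embed_iff (hsucc v) (hzero_of_v0 v hv00)).mp hr1
        refine ⟨Projectivization.mk ℂ (v ∘ Fin.succ) hw,
          ⟨v ∘ Fin.succ, hw, rfl, ?_, (tensorRank_eq_one_iff _).mpr hr1B⟩, ?_⟩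
        · intro h
          apply hFv
          rw [hevalF, hv00, zero_pow (by omega : n ≠ 0), zero_add, h]
        · rw [hφ, Projectivization.map_mk, Projectivization.mk_eq_mk_iff']
          refine ⟨1, ?_⟩
          rw [one_smul, hcz]
          funext i
          refine Fin.cases ?_ (fun j => ?_) i
          · rw [Fin.cons_zero, hv00]
          · rw [Fin.cons_succ]; rfl
    · rintro (rfl | ⟨q, hq, rfl⟩)
      · have he0succ : e0 ∘ Fin.succ = 0 := by
          funext j
          simp [he0def]
        refine ⟨e0, he0, rfl, ?_, ?_⟩
        · rw [hevalF, he0succ, eval_zero_of_isHomogeneous hG (by omega), he00]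
          simp
        · apply (tensorRank_eq_one_iff _).mpr
          exact isRankOne_delta hkne (a := d * e0 0)
            (by rw [he00, mul_one]; exact hd) (key0 e0 he0succ)
      · obtain ⟨w, hw, rfl, hGw, hrkG⟩ := hq
        set v : Fin (b + 1) → ℂ := (consZero b) w with hvdef
        have hv : v ≠ 0 := by
          intro h
          apply hw
          apply consZero_injective b
          rw [← hvdef, h, map_zero]
        have hv0 : v 0 = 0 := by rw [hvdef, hcz, Fin.cons_zero]
        have hvs : v ∘ Fin.succ = w := by
          funext j
          rw [hvdef, Function.comp_apply, hcz, Fin.cons_succ]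
        refine ⟨v, hv, ?_, ?_, ?_⟩
        · rw [hφ, Projectivization.map_mk]
        · rw [hevalF, hv0, hvs, zero_pow (by omega : n ≠ 0), zero_add]
          exact hGw
        · apply (tensorRank_eq_one_iff _).mpr
          apply (isRankOne_embed_iff (hsucc v) (hzero_of_v0 v hv0)).mpr
          rw [hvs]
          exact (tensorRank_eq_one_iff _).mp hrkG
  have hnotmem : Projectivization.mk ℂ e0 he0 ∉ φ '' SG := by
    rintro ⟨q, hq, hψ⟩
    obtain ⟨w, hw, rfl, -, -⟩ := hq
    rw [hφ, Projectivization.map_mk, Projectivization.mk_eq_mk_iff'] at hψ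
    obtain ⟨a, ha⟩ := hψ
    have h0 := congrFun ha 0
    rw [Pi.smul_apply, he00, smul_eq_mul, mul_one, hcz, Fin.cons_zero] at h0
    apply hw
    funext j
    have hj := congrFun ha (Fin.succ j)
    rw [Pi.smul_apply, smul_eq_mul, hcz, Fin.cons_succ] at hj
    have : e0 (Fin.succ j) = 0 := by simp [he0def]
    rw [this, mul_zero] at hj
    exact hj.symm
  rw [hset, Set.encard_insert_of_notMem hnotmem,
    (Projectivization.map_injective (consZero b) (consZero_injective b)).injOn.encard_image,
    add_comm]
end
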